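/- arXiv:1312.4769 — 3 statements merged into one kernel-verified Lean document; each statement's English description precedes it below -/
import Mathlib

section
/- A set of pairwise noncrossing (m+1)-diagonals of the regular N-gon, no two of which share a vertex, is maximal with respect to these two properties if and only if it has exactly n elements. -/
/- `(m+1)`-diagonals of a regular `N`-gon with vertices labelled `1, …, N`
clockwise, `N = (n+1)(m+1) - 2`. -/

namespace PolygonDiagonals

/-- `p = (i,j)` with `1 ≤ i < j ≤ N` is an `(m+1)`-diagonal: `m+1 ∣ j - i + 1`. -/
def IsDiagL (N m : ℤ) (p : ℤ × ℤ) : Prop :=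
  1 ≤ p.1 ∧ p.1 < p.2 ∧ p.2 ≤ N ∧ (m + 1) ∣ (p.2 - p.1 + 1)

/-- Two diagonals cross iff their endpoints strictly interleave around the circle. -/
def CrossD (p q : ℤ × ℤ) : Prop :=
  (p.1 < q.1 ∧ q.1 < p.2 ∧ p.2 < q.2) ∨ (q.1 < p.1 ∧ p.1 < q.2 ∧ q.2 < p.2)

/-- Two diagonals share a vertex. -/
def ShareV (p q : ℤ × ℤ) : Prop :=
  p.1 = q.1 ∨ p.1 = q.2 ∨ p.2 = q.1 ∨ p.2 = q.2

def phi (i L x : ℤ) : ℤ := if x < i then x else x - L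

def Phi (i L : ℤ) (p : ℤ × ℤ) : ℤ × ℤ := (phi i L p.1, phi i L p.2)

lemma isolation (N : ℤ) (m : ℕ) (S : Finset (ℤ × ℤ))
    (hd : ∀ p ∈ S, IsDiagL N m p)
    (hnc : ∀ p ∈ S, ∀ q ∈ S, p ≠ q → ¬ CrossD p q ∧ ¬ ShareV p q)
    (d : ℤ × ℤ) (hdS : d ∈ S)
    (hmin : ∀ q ∈ S, d.2 - d.1 ≤ q.2 - q.1) :
    ∀ q ∈ S, q ≠ d → (q.1 < d.1 ∨ d.2 < q.1) ∧ (q.2 < d.1 ∨ d.2 < q.2) := by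
  intro q hq hne
  obtain ⟨hc, hs⟩ := hnc q hq d hdS hne
  obtain ⟨hq1, hq2, hq3, -⟩ := hd q hq
  obtain ⟨hd1, hd2, hd3, -⟩ := hd d hdS
  have hm := hmin q hq
  unfold CrossD at hc
  unfold ShareV at hs
  omega

lemma contract (N : ℤ) (m : ℕ) (S : Finset (ℤ × ℤ))
    (hd : ∀ p ∈ S, IsDiagL N m p)
    (hnc : ∀ p ∈ S, ∀ q ∈ S, p ≠ q → ¬ CrossD p q ∧ ¬ ShareV p q)
    (d : ℤ × ℤ) (hdS : d ∈ S)
    (hmin : ∀ q ∈ S, d.2 - d.1 ≤ q.2 - q.1) :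
    (∀ p ∈ (S.erase d).image (Phi d.1 (d.2 - d.1 + 1)),
       IsDiagL (N - (d.2 - d.1 + 1)) m p) ∧
    (∀ p ∈ (S.erase d).image (Phi d.1 (d.2 - d.1 + 1)),
       ∀ q ∈ (S.erase d).image (Phi d.1 (d.2 - d.1 + 1)), p ≠ q →
         ¬ CrossD p q ∧ ¬ ShareV p q) ∧
    ((S.erase d).image (Phi d.1 (d.2 - d.1 + 1))).card = S.card - 1 := by
  have hiso := isolation N m S hd hnc d hdS hmin
  obtain ⟨hd1, hd2, hd3, hd4⟩ := hd d hdS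
  refine ⟨?_, ?_, ?_⟩
  · rintro p' hp'
    obtain ⟨p, hp, rfl⟩ := Finset.mem_image.1 hp'
    have hpS := Finset.mem_of_mem_erase hp
    obtain ⟨h1, h2, h3, h4⟩ := hd p hpS
    have hav := hiso p hpS (Finset.ne_of_mem_erase hp)
    refine ⟨?_, ?_, ?_, ?_⟩ <;> simp only [Phi, phi]
    · split_ifs <;> omega
    · split_ifs <;> omega
    · split_ifs <;> omega
    · have he1 : p.2 - (d.2 - d.1 + 1) - p.1 + 1
          = (p.2 - p.1 + 1) - (d.2 - d.1 + 1) := by ring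
      have he2 : p.2 - (d.2 - d.1 + 1) - (p.1 - (d.2 - d.1 + 1)) + 1
          = p.2 - p.1 + 1 := by ring
      have he3 : p.2 - (p.1 - (d.2 - d.1 + 1)) + 1
          = (p.2 - p.1 + 1) + (d.2 - d.1 + 1) := by ring
      split_ifs
      · exact h4
      · rw [he3]; exact dvd_add h4 hd4
      · rw [he1]; exact dvd_sub h4 hd4
      · rw [he2]; exact h4
  · rintro p' hp' q' hq' hne
    obtain ⟨p, hp, rfl⟩ := Finset.mem_image.1 hp'
    obtain ⟨q, hq, rfl⟩ := Finset.mem_image.1 hq'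
    have hpq : p ≠ q := fun h => hne (by rw [h])
    have hpS := Finset.mem_of_mem_erase hp
    have hqS := Finset.mem_of_mem_erase hq
    obtain ⟨hc, hs⟩ := hnc p hpS q hqS hpq
    have havp := hiso p hpS (Finset.ne_of_mem_erase hp)
    have havq := hiso q hqS (Finset.ne_of_mem_erase hq)
    obtain ⟨hp1, hp2, hp3, -⟩ := hd p hpS
    obtain ⟨hq1, hq2, hq3, -⟩ := hd q hqS
    unfold CrossD at hc
    unfold ShareV at hs
    constructor <;>
      · simp only [CrossD, ShareV, Phi, phi]
        split_ifs <;> omega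
  · rw [Finset.card_image_of_injOn, Finset.card_erase_of_mem hdS]
    intro p hp q hq heq
    have hp' := Finset.mem_coe.1 hp
    have hq' := Finset.mem_coe.1 hq
    have havp := hiso p (Finset.mem_of_mem_erase hp') (Finset.ne_of_mem_erase hp')
    have havq := hiso q (Finset.mem_of_mem_erase hq') (Finset.ne_of_mem_erase hq')
    have h1 : phi d.1 (d.2 - d.1 + 1) p.1 = phi d.1 (d.2 - d.1 + 1) q.1 :=
      congrArg Prod.fst heq
    have h2 : phi d.1 (d.2 - d.1 + 1) p.2 = phi d.1 (d.2 - d.1 + 1) q.2 :=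
      congrArg Prod.snd heq
    unfold phi at h1 h2
    have e1 : p.1 = q.1 := by split_ifs at h1 <;> omega
    have e2 : p.2 = q.2 := by split_ifs at h2 <;> omega
    exact Prod.ext_iff.2 ⟨e1, e2⟩





lemma lemA (m : ℕ) (hm : 1 ≤ m) : ∀ n : ℕ, ∀ S : Finset (ℤ × ℤ),
    (∀ p ∈ S, IsDiagL (((n : ℤ) + 1) * ((m : ℤ) + 1) - 2) m p) →
    (∀ p ∈ S, ∀ q ∈ S, p ≠ q → ¬ CrossD p q ∧ ¬ ShareV p q) →
    S.card ≤ n := by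
  intro n
  induction n using Nat.strong_induction_on with
  | _ n ih =>
    intro S hd hnc
    rcases S.eq_empty_or_nonempty with rfl | hne
    · simp
    obtain ⟨d, hdS, hmin'⟩ := S.exists_min_image (fun p => p.2 - p.1) hne
    have hmin : ∀ q ∈ S, d.2 - d.1 ≤ q.2 - q.1 := hmin'
    obtain ⟨hd1, hd2, hd3, hd4⟩ := hd d hdS
    obtain ⟨k, hk⟩ := hd4
    have hm1 : (0:ℤ) < (m:ℤ) + 1 := by positivity
    have hk1 : 1 ≤ k := by nlinarith
    have hkn : k ≤ (n : ℤ) := by nlinarith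
    obtain ⟨hA, hB, hC⟩ := contract _ m S hd hnc d hdS hmin
    have hcast : (((n - k.toNat : ℕ)) : ℤ) = (n : ℤ) - k := by omega
    have hNN : ((n : ℤ) + 1) * ((m:ℤ)+1) - 2 - (d.2 - d.1 + 1)
        = (((n - k.toNat : ℕ) : ℤ) + 1) * ((m:ℤ)+1) - 2 := by
      rw [hcast, hk]; ring
    have hcard' := ih (n - k.toNat) (by omega) _
      (by rw [← hNN]; exact hA) hB
    have hpos : 1 ≤ S.card := Finset.card_pos.2 hne
    omega





lemma lemB (m : ℕ) (hm : 1 ≤ m) : ∀ n : ℕ, ∀ S : Finset (ℤ × ℤ),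
    (∀ p ∈ S, IsDiagL (((n : ℤ) + 1) * ((m : ℤ) + 1) - 2) m p) →
    (∀ p ∈ S, ∀ q ∈ S, p ≠ q → ¬ CrossD p q ∧ ¬ ShareV p q) →
    S.card < n →
    ∃ e, e ∉ S ∧ IsDiagL (((n : ℤ) + 1) * ((m : ℤ) + 1) - 2) m e ∧
      ∀ q ∈ S, ¬ CrossD e q ∧ ¬ ShareV e q := by
  intro n
  induction n using Nat.strong_induction_on with
  | _ n ih =>
    intro S hd hnc hcard
    have hm1 : (0:ℤ) < (m:ℤ) + 1 := by positivity
    have hmz : (1:ℤ) ≤ (m:ℤ) := by exact_mod_cast hm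
    rcases S.eq_empty_or_nonempty with rfl | hne
    · have hn1 : (1:ℤ) ≤ (n:ℤ) := by
        have : 0 < n := by simpa using hcard
        exact_mod_cast this
      have hbound : (m:ℤ) + 1 ≤ ((n : ℤ) + 1) * ((m : ℤ) + 1) - 2 := by nlinarith
      refine ⟨(1, (m:ℤ)+1), by simp, ⟨?_, ?_, ?_, ?_⟩, by simp⟩
      · show (1:ℤ) ≤ 1; exact le_refl 1
      · show (1:ℤ) < (m:ℤ) + 1; omega
      · exact hbound
      · show ((m:ℤ)+1) ∣ ((m:ℤ) + 1 - 1 + 1); exact ⟨1, by ring⟩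
    obtain ⟨d, hdS, hmin'⟩ := S.exists_min_image (fun p => p.2 - p.1) hne
    have hmin : ∀ q ∈ S, d.2 - d.1 ≤ q.2 - q.1 := hmin'
    have hiso := isolation _ m S hd hnc d hdS hmin
    obtain ⟨hd1, hd2, hd3, hd4⟩ := hd d hdS
    obtain ⟨k, hk⟩ := hd4
    have hk1 : 1 ≤ k := by nlinarith
    by_cases hk2 : 2 ≤ k
    · -- insert a small diagonal strictly inside d
      have hstep : d.1 + ((m:ℤ) + 1) < d.2 := by nlinarith
      refine ⟨(d.1 + 1, d.1 + ((m:ℤ)+1)), ?_, ?_, ?_⟩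
      · intro hmem
        have hne' : ((d.1 + 1, d.1 + ((m:ℤ)+1)) : ℤ × ℤ) ≠ d := by
          intro h
          have h1 : d.1 + 1 = d.1 := congrArg Prod.fst h
          omega
        have hcontr : d.1 + 1 < d.1 ∨ d.2 < d.1 + 1 := (hiso _ hmem hne').1
        omega
      · refine ⟨?_, ?_, ?_, ?_⟩
        · show (1:ℤ) ≤ d.1 + 1; omega
        · show d.1 + 1 < d.1 + ((m:ℤ)+1); omega
        · show d.1 + ((m:ℤ)+1) ≤ ((n : ℤ) + 1) * ((m : ℤ) + 1) - 2; omega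
        · show ((m:ℤ)+1) ∣ (d.1 + ((m:ℤ)+1) - (d.1 + 1) + 1); exact ⟨1, by ring⟩
      · intro q hq
        by_cases hqd : q = d
        · subst hqd
          simp only [CrossD, ShareV]
          omega
        · have hav := hiso q hq hqd
          obtain ⟨hq1, hq2, hq3, -⟩ := hd q hq
          simp only [CrossD, ShareV]
          omega
    · -- k = 1 : contract and lift
      have hLm : d.2 - d.1 + 1 = (m:ℤ) + 1 := by
        have hke : k = 1 := by omega
        rw [hk, hke]; ring
      have hpos : 1 ≤ S.card := Finset.card_pos.2 hne
      have hn2 : 2 ≤ n := by omega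
      obtain ⟨hA, hB, hC⟩ := contract _ m S hd hnc d hdS hmin
      have hcast : (((n - 1 : ℕ)) : ℤ) = (n : ℤ) - 1 := by omega
      have hNN : ((n : ℤ) + 1) * ((m:ℤ)+1) - 2 - (d.2 - d.1 + 1)
          = (((n - 1 : ℕ) : ℤ) + 1) * ((m:ℤ)+1) - 2 := by
        rw [hcast, hLm]; ring
      obtain ⟨e', he'S, he'd, he'nc⟩ := ih (n - 1) (by omega) _
        (by rw [← hNN]; exact hA) hB (by omega)
      obtain ⟨ha1, hab, hbN, hdvd'⟩ := he'd
      have hbN' : e'.2 ≤ ((n : ℤ) + 1) * ((m:ℤ)+1) - 2 - (d.2 - d.1 + 1) := by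
        rw [hNN]; exact hbN
      obtain ⟨a, hacase⟩ : ∃ a : ℤ,
          (e'.1 < d.1 ∧ a = e'.1) ∨ (d.1 ≤ e'.1 ∧ a = e'.1 + (d.2 - d.1 + 1)) := by
        by_cases h : e'.1 < d.1
        · exact ⟨e'.1, Or.inl ⟨h, rfl⟩⟩
        · exact ⟨e'.1 + (d.2 - d.1 + 1), Or.inr ⟨by omega, rfl⟩⟩
      obtain ⟨b, hbcase⟩ : ∃ b : ℤ,
          (e'.2 < d.1 ∧ b = e'.2) ∨ (d.1 ≤ e'.2 ∧ b = e'.2 + (d.2 - d.1 + 1)) := by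
        by_cases h : e'.2 < d.1
        · exact ⟨e'.2, Or.inl ⟨h, rfl⟩⟩
        · exact ⟨e'.2 + (d.2 - d.1 + 1), Or.inr ⟨by omega, rfl⟩⟩
      have hava : a < d.1 ∨ d.2 < a := by omega
      have havb : b < d.1 ∨ d.2 < b := by omega
      have hproj : Phi d.1 (d.2 - d.1 + 1) (a, b) = e' := by
        have h1 : phi d.1 (d.2 - d.1 + 1) a = e'.1 := by unfold phi; split_ifs <;> omega
        have h2 : phi d.1 (d.2 - d.1 + 1) b = e'.2 := by unfold phi; split_ifs <;> omega
        rw [Prod.ext_iff]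
        exact ⟨h1, h2⟩
      refine ⟨(a, b), ?_, ?_, ?_⟩
      · intro hmem
        have hnd : ((a, b) : ℤ × ℤ) ≠ d := by
          intro h
          have h1 : a = d.1 := congrArg Prod.fst h
          omega
        exact he'S (hproj ▸ Finset.mem_image_of_mem _ (Finset.mem_erase.2 ⟨hnd, hmem⟩))
      · refine ⟨?_, ?_, ?_, ?_⟩
        · show (1:ℤ) ≤ a; omega
        · show a < b; omega
        · show b ≤ ((n : ℤ) + 1) * ((m : ℤ) + 1) - 2; omega
        · show ((m:ℤ)+1) ∣ (b - a + 1)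
          have hmd : ((m:ℤ) + 1) ∣ (d.2 - d.1 + 1) := ⟨1, by rw [hLm]; ring⟩
          rcases hacase with ⟨h1, rfl⟩ | ⟨h1, rfl⟩ <;>
            rcases hbcase with ⟨h2, rfl⟩ | ⟨h2, rfl⟩
          · exact hdvd'
          · have he3 : e'.2 + (d.2 - d.1 + 1) - e'.1 + 1
                = (e'.2 - e'.1 + 1) + (d.2 - d.1 + 1) := by ring
            rw [he3]; exact dvd_add hdvd' hmd
          · exact absurd hab (by omega)
          · have he4 : e'.2 + (d.2 - d.1 + 1) - (e'.1 + (d.2 - d.1 + 1)) + 1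
                = e'.2 - e'.1 + 1 := by ring
            rw [he4]; exact hdvd'
      · intro q hq
        by_cases hqd : q = d
        · subst hqd
          simp only [CrossD, ShareV]
          omega
        · have hav := hiso q hq hqd
          obtain ⟨hq1, hq2, hq3, -⟩ := hd q hq
          obtain ⟨hc', hs'⟩ := he'nc (Phi d.1 (d.2 - d.1 + 1) q)
            (Finset.mem_image_of_mem _ (Finset.mem_erase.2 ⟨hqd, hq⟩))
          simp only [CrossD, ShareV, Phi, phi] at hc' hs' ⊢
          split_ifs at hc' hs' <;> omega

/-- A set of pairwise noncrossing `(m+1)`-diagonals of the regular `N`-gon, no two of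
which share a vertex, is maximal with respect to these two properties iff it has
exactly `n` elements. -/
theorem stmt14 (n m : ℕ) (hn : 1 ≤ n) (hm : 1 ≤ m) (N : ℤ)
    (hN : N = (n + 1) * (m + 1) - 2)
    (S : Set (ℤ × ℤ)) (hSd : ∀ p ∈ S, IsDiagL N m p)
    (hS : ∀ p ∈ S, ∀ q ∈ S, p ≠ q → ¬ CrossD p q ∧ ¬ ShareV p q) :
    (∀ T : Set (ℤ × ℤ), S ⊆ T → (∀ p ∈ T, IsDiagL N m p) →
        (∀ p ∈ T, ∀ q ∈ T, p ≠ q → ¬ CrossD p q ∧ ¬ ShareV p q) → T = S) ↔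
      (S.Finite ∧ S.ncard = n) := by
  have hsym_c : ∀ p q : ℤ × ℤ, CrossD p q → CrossD q p := by
    intro p q h; unfold CrossD at *; tauto
  have hsym_s : ∀ p q : ℤ × ℤ, ShareV p q → ShareV q p := by
    intro p q h; unfold ShareV at *; tauto
  have hfin : ∀ T : Set (ℤ × ℤ), (∀ p ∈ T, IsDiagL N m p) → T.Finite := by
    intro T hT
    apply Set.Finite.subset ((Set.finite_Icc (1:ℤ) N).prod (Set.finite_Icc (1:ℤ) N))
    rintro ⟨x, y⟩ hp
    obtain ⟨h1, h2, h3, -⟩ := hT _ hp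
    exact ⟨⟨h1, by omega⟩, ⟨by omega, h3⟩⟩
  have hbound : ∀ T : Set (ℤ × ℤ), (∀ p ∈ T, IsDiagL N m p) →
      (∀ p ∈ T, ∀ q ∈ T, p ≠ q → ¬ CrossD p q ∧ ¬ ShareV p q) → T.ncard ≤ n := by
    intro T hTd hTnc
    have hf := hfin T hTd
    rw [Set.ncard_eq_toFinset_card T hf]
    apply lemA m hm n
    · intro p hp
      rw [← hN]
      exact hTd p (hf.mem_toFinset.1 hp)
    · intro p hp q hq hne
      exact hTnc p (hf.mem_toFinset.1 hp) q (hf.mem_toFinset.1 hq) hne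
  constructor
  · intro hmax
    have hfS := hfin S hSd
    refine ⟨hfS, ?_⟩
    have hle := hbound S hSd hS
    by_contra hlt'
    have hlt : S.ncard < n := lt_of_le_of_ne hle hlt'
    obtain ⟨e, heS, hed, henc⟩ := lemB m hm n hfS.toFinset
      (by intro p hp; rw [← hN]; exact hSd p (hfS.mem_toFinset.1 hp))
      (by intro p hp q hq hne; exact hS p (hfS.mem_toFinset.1 hp) q (hfS.mem_toFinset.1 hq) hne)
      (by rw [← Set.ncard_eq_toFinset_card S hfS]; exact hlt)
    rw [← hN] at hed
    have heS' : e ∉ S := fun h => heS (hfS.mem_toFinset.2 h)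
    have henc' : ∀ q ∈ S, ¬ CrossD e q ∧ ¬ ShareV e q :=
      fun q hq => henc q (hfS.mem_toFinset.2 hq)
    have hTeq : insert e S = S := by
      apply hmax
      · exact Set.subset_insert e S
      · intro p hp
        rcases Set.mem_insert_iff.1 hp with rfl | hp
        · exact hed
        · exact hSd p hp
      · intro p hp q hq hne
        rcases Set.mem_insert_iff.1 hp with rfl | hp <;>
          rcases Set.mem_insert_iff.1 hq with rfl | hq
        · exact absurd rfl hne
        · exact henc' q hq
        · have hpS : p ∈ S := by
            rcases Set.mem_insert_iff.1 hp with h | h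
            · exact absurd h hne
            · exact h
          exact ⟨fun h => (henc' p hpS).1 (hsym_c _ _ h),
            fun h => (henc' p hpS).2 (hsym_s _ _ h)⟩
        · exact hS p hp q hq hne
    exact heS' (hTeq ▸ Set.mem_insert e S)
  · rintro ⟨hfS, hcard⟩ T hsub hTd hTnc
    have hTle := hbound T hTd hTnc
    exact (Set.eq_of_subset_of_ncard_le hsub (by rw [hcard]; exact hTle) (hfin T hTd)).symm

end PolygonDiagonals
end

section
/- Let w = −m and d = −(m+1). The map G sending an (m+1)-diagonal {i,j} with 1 ≤ i < j ≤ N to the pair (N+1−i, N+1−j) is a bijection from the set of (m+1)-diagonals of the regular N-gon onto the set of d-admissible arcs (x,y) with 0 < y < x < N+1; moreover, two diagonals cross (respectively, share a vertex) if and only if their image arcs cross (respectively, share a vertex). -/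
/- `(m+1)`-diagonals of a regular `N`-gon with vertices labelled `1, …, N`
clockwise, `N = (n+1)(m+1) - 2`. -/

namespace PolygonDiagonals

/-- `(t,u)` is a `d`-admissible arc for `d = w - 1`:
`t > u`, `t - u ≥ |d| - 1 = -w` and `(1 - w) ∣ (t - u + 1)`. -/
def Adm (w : ℤ) (a : ℤ × ℤ) : Prop :=
  a.2 < a.1 ∧ -w ≤ a.1 - a.2 ∧ (1 - w) ∣ (a.1 - a.2 + 1)

/-- Arcs `(t,u)` and `(t',u')` cross if `u < u' < t < t'` or `u' < u < t' < t`. -/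
def Cross (a b : ℤ × ℤ) : Prop :=
  (a.2 < b.2 ∧ b.2 < a.1 ∧ a.1 < b.1) ∨ (b.2 < a.2 ∧ a.2 < b.1 ∧ b.1 < a.1)

/-- Arcs share a vertex if `{t,u} ∩ {t',u'} ≠ ∅`. -/
def ShareVertex (a b : ℤ × ℤ) : Prop :=
  a.1 = b.1 ∨ a.1 = b.2 ∨ a.2 = b.1 ∨ a.2 = b.2

/-- Theorem 6.5 (key bijection): with `w = -m` and `d = -(m+1)`, the map
`G : {i,j} ↦ (N+1-i, N+1-j)` is a bijection from the `(m+1)`-diagonals of the regular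
`N`-gon onto the `d`-admissible arcs `(x,y)` with `0 < y < x < N+1`; moreover two
diagonals cross (resp. share a vertex) iff their image arcs do. -/
theorem stmt15 (n m : ℕ) (hn : 1 ≤ n) (hm : 1 ≤ m) (N : ℤ)
    (hN : N = (n + 1) * (m + 1) - 2) :
    Set.BijOn (fun p : ℤ × ℤ => ((N + 1 - p.1, N + 1 - p.2) : ℤ × ℤ))
      {p | IsDiagL N m p}
      {a : ℤ × ℤ | Adm (-(m : ℤ)) a ∧ 0 < a.2 ∧ a.1 < N + 1} ∧
    ∀ p q : ℤ × ℤ, IsDiagL N m p → IsDiagL N m q →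
      ((CrossD p q ↔ Cross (N + 1 - p.1, N + 1 - p.2) (N + 1 - q.1, N + 1 - q.2)) ∧
       (ShareV p q ↔
        ShareVertex (N + 1 - p.1, N + 1 - p.2) (N + 1 - q.1, N + 1 - q.2))) := by
  constructor
  · refine ⟨?_, ?_, ?_⟩
    · rintro ⟨i, j⟩ ⟨h1, h2, h3, h4⟩
      simp only [Set.mem_setOf_eq] at *
      have hge : (m : ℤ) + 1 ≤ j - i + 1 := Int.le_of_dvd (by omega) h4
      refine ⟨⟨by omega, by omega, ?_⟩, by omega, by omega⟩
      · have e1 : (N + 1 - i) - (N + 1 - j) + 1 = j - i + 1 := by ring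
        have e2 : (1 : ℤ) - -(m : ℤ) = (m : ℤ) + 1 := by ring
        rw [e1, e2]; exact h4
    · rintro ⟨i, j⟩ ⟨h1, h2, h3, h4⟩ ⟨i', j'⟩ ⟨h1', h2', h3', h4'⟩ heq
      simp only [Prod.mk.injEq] at heq
      obtain ⟨e1, e2⟩ := heq
      simp only [Prod.ext_iff]
      constructor <;> omega
    · rintro ⟨x, y⟩ ⟨⟨ha1, ha2, ha3⟩, hy, hx⟩
      refine ⟨(N + 1 - x, N + 1 - y), ?_, ?_⟩
      · simp only [Set.mem_setOf_eq] at *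
        refine ⟨by omega, by omega, by omega, ?_⟩
        have e1 : (N + 1 - y) - (N + 1 - x) + 1 = x - y + 1 := by ring
        have e2 : (1 : ℤ) - -(m : ℤ) = (m : ℤ) + 1 := by ring
        rw [e1, ← e2]; exact ha3
      · simp only [Prod.mk.injEq]
        constructor <;> ring
  · rintro ⟨i, j⟩ ⟨i', j'⟩ ⟨h1, h2, h3, h4⟩ ⟨h1', h2', h3', h4'⟩
    constructor
    · unfold CrossD Cross; dsimp; constructor <;> intro h <;> omega
    · unfold ShareV ShareVertex; dsimp; constructor <;> intro h <;> omega
end PolygonDiagonals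
end

section
/- The map f is a bijection from the set of |−1|-Hom-configurations onto the set of noncrossing partitions of ℤ having at most one infinite block. -/
/- The case `w = -1`, `d = -2`: arcs of the ∞-gon with odd positive length, and
noncrossing partitions of `ℤ`. -/

namespace NegOneCY

/-- A `(-2)`-admissible arc: a pair of integers `(t,u)` with `t - u` positive and
odd. -/
def Arcm1 (a : ℤ × ℤ) : Prop := 0 < a.1 - a.2 ∧ Odd (a.1 - a.2)

/-- Arcs `(t,u)` and `(t',u')` cross if `u < u' < t < t'` or `u' < u < t' < t`. -/
def Cross (a b : ℤ × ℤ) : Prop :=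
  (a.2 < b.2 ∧ b.2 < a.1 ∧ a.1 < b.1) ∨ (b.2 < a.2 ∧ a.2 < b.1 ∧ b.1 < a.1)

/-- Arcs share a vertex if `{t,u} ∩ {t',u'} ≠ ∅`. -/
def ShareVertex (a b : ℤ × ℤ) : Prop :=
  a.1 = b.1 ∨ a.1 = b.2 ∨ a.2 = b.1 ∨ a.2 = b.2

/-- A collection of admissible arcs, pairwise noncrossing and pairwise sharing no
vertex. -/
def NCColl (H : Set (ℤ × ℤ)) : Prop :=
  (∀ a ∈ H, Arcm1 a) ∧ ∀ a ∈ H, ∀ b ∈ H, a ≠ b → ¬ Cross a b ∧ ¬ ShareVertex a b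

/-- A `|-1|`-Hom-configuration: a maximal such collection. -/
def HomConfigM1 (H : Set (ℤ × ℤ)) : Prop :=
  NCColl H ∧ ∀ H' : Set (ℤ × ℤ), NCColl H' → H ⊆ H' → H' = H

/-- `P` is a partition of `ℤ`: a set of pairwise disjoint nonempty blocks whose union
is all of `ℤ`. -/
def IsPartition (P : Set (Set ℤ)) : Prop :=
  (∀ B ∈ P, B.Nonempty) ∧ ∀ z : ℤ, ∃! B : Set ℤ, B ∈ P ∧ z ∈ B

/-- `P` is noncrossing: there are no `a < b < c < d` with `a, c` in one block and
`b, d` in a different block. -/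
def Noncrossing (P : Set (Set ℤ)) : Prop :=
  ¬ ∃ a b c d : ℤ, a < b ∧ b < c ∧ c < d ∧
    ∃ B ∈ P, ∃ B' ∈ P, B ≠ B' ∧ a ∈ B ∧ c ∈ B ∧ b ∈ B' ∧ d ∈ B'

/-- `f(H)`: the partition of `ℤ` into the equivalence classes of the equivalence
relation generated by `n ~ p` whenever the arc `(2p, 2n+1)` belongs to `H`. -/
def fmap (H : Set (ℤ × ℤ)) : Set (Set ℤ) :=
  {B | ∃ x : ℤ,
    B = {y | Relation.EqvGen (fun n p => ((2 * p, 2 * n + 1) : ℤ × ℤ) ∈ H) x y}}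

open scoped Classical

/-! ### Generic helpers -/

lemma cross_symm {a b : ℤ × ℤ} : Cross a b ↔ Cross b a := by
  unfold Cross; tauto

/-- number of points of `s` in `(e, x]`. -/
noncomputable def cnt (s : Set ℤ) (e x : ℤ) : ℕ := (s ∩ Set.Ioc e x).ncard

lemma cnt_finite (s : Set ℤ) (e x : ℤ) : (s ∩ Set.Ioc e x).Finite :=
  (Set.finite_Ioc e x).subset (by intro y hy; exact hy.2)

lemma cnt_zero (s : Set ℤ) {e x : ℤ} (h : x ≤ e) : cnt s e x = 0 := by
  unfold cnt
  rw [Set.Ioc_eq_empty (by omega), Set.inter_empty, Set.ncard_empty]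

lemma cnt_split (s : Set ℤ) {e m x : ℤ} (h1 : e ≤ m) (h2 : m ≤ x) :
    cnt s e x = cnt s e m + cnt s m x := by
  unfold cnt
  rw [← Set.ncard_union_eq ?dis (cnt_finite s e m) (cnt_finite s m x)]
  · congr 1
    rw [← Set.inter_union_distrib_left, Set.Ioc_union_Ioc_eq_Ioc h1 h2]
  case dis =>
    refine Set.disjoint_left.2 ?_
    rintro y ⟨-, hy1⟩ ⟨-, hy2⟩
    simp only [Set.mem_Ioc] at hy1 hy2
    omega

lemma cnt_pos (s : Set ℤ) {e x y : ℤ} (hy : y ∈ s) (h1 : e < y) (h2 : y ≤ x) :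
    1 ≤ cnt s e x :=
  Nat.one_le_iff_ne_zero.2 (by
    have : 0 < cnt s e x := (Set.ncard_pos (cnt_finite s e x)).2 ⟨y, hy, h1, h2⟩
    omega)

lemma cnt_succ (s : Set ℤ) {e y : ℤ} (h : e ≤ y) :
    cnt s e (y + 1) = cnt s e y + (if y + 1 ∈ s then 1 else 0) := by
  rw [cnt_split s h (by omega)]
  congr 1
  unfold cnt
  have hI : Set.Ioc y (y+1) = {y+1} := by ext z; simp [Set.mem_Ioc]; omega
  rw [hI]
  by_cases hy : y + 1 ∈ s
  · have : s ∩ ({y+1} : Set ℤ) = {y+1} := by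
      ext z; simp only [Set.mem_inter_iff, Set.mem_singleton_iff]
      constructor
      · rintro ⟨-, h⟩; exact h
      · rintro rfl; exact ⟨hy, rfl⟩
    rw [this]; simp [hy]
  · have : s ∩ ({y+1} : Set ℤ) = ∅ := by
      ext z; simp only [Set.mem_inter_iff, Set.mem_singleton_iff]
      constructor
      · rintro ⟨hz, rfl⟩; exact hy hz
      · exact fun h => h.elim
    rw [this]; simp [hy]

lemma walk_le (S T : Set ℤ) (hd : Disjoint S T) {e X : ℤ}
    (hnb : ∀ o', o' ∈ T → e < o' → o' ≤ X → cnt S e (o'-1) ≠ cnt T e (o'-1)) :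
    ∀ x, e ≤ x → x ≤ X → cnt T e x ≤ cnt S e x := by
  refine Int.le_induction (motive := fun x _ => x ≤ X → cnt T e x ≤ cnt S e x) ?_ ?_
  · intro _; rw [cnt_zero T le_rfl, cnt_zero S le_rfl]
  · intro y hy IH hyX
    have h1 := IH (by omega)
    rw [cnt_succ S hy, cnt_succ T hy]
    by_cases hT : y + 1 ∈ T
    · have hS : y + 1 ∉ S := fun hS => Set.disjoint_left.1 hd hS hT
      have h2 := hnb (y+1) hT (by omega) (by omega)
      have hy1 : y + 1 - 1 = y := by omega
      rw [hy1] at h2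
      simp only [hS, hT, if_true, if_false]
      omega
    · by_cases hS : y + 1 ∈ S <;> simp only [hT, hS, if_true, if_false] <;> omega

lemma walk_dip (S T : Set ℤ) (hd : Disjoint S T) {e x : ℤ} (he : e ≤ x)
    (h : cnt S e x < cnt T e x) :
    ∃ o' ∈ T, e < o' ∧ o' ≤ x ∧ cnt S e (o'-1) = cnt T e (o'-1) := by
  by_contra hc
  push_neg at hc
  exact absurd (walk_le S T hd (fun o' h1 h2 h3 => hc o' h1 h2 h3) x he le_rfl) (by omega)

lemma ncard_lt_of_inj_extra {A B : Set ℤ} (f : ℤ → ℤ) (hf : ∀ a ∈ A, f a ∈ B)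
    (hinj : Set.InjOn f A) (b₀ : ℤ) (hb₀ : b₀ ∈ B) (hnot : ∀ a ∈ A, f a ≠ b₀)
    (hfin : B.Finite) : A.ncard < B.ncard := by
  have h1 : A.ncard ≤ (B \ {b₀}).ncard :=
    Set.ncard_le_ncard_of_injOn f (fun a ha => ⟨hf a ha, by simp [hnot a ha]⟩) hinj
      (hfin.subset Set.diff_subset)
  have h2 : (B \ {b₀}).ncard < B.ncard := by
    refine Set.ncard_lt_ncard ⟨Set.diff_subset, fun hsub => ?_⟩ hfin
    exact (hsub hb₀).2 rfl
  omega

lemma ncard_le_of_inj {A B : Set ℤ} (f : ℤ → ℤ) (hf : ∀ a ∈ A, f a ∈ B)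
    (hinj : Set.InjOn f A) (hfin : B.Finite) : A.ncard ≤ B.ncard :=
  Set.ncard_le_ncard_of_injOn f hf hinj hfin


/-! ### Partition layer -/

section Partition
variable (P : Set (Set ℤ))

def blkMem (x y : ℤ) : Prop := ∃ B ∈ P, x ∈ B ∧ y ∈ B
def isMin (q : ℤ) : Prop := ∀ x, blkMem P q x → q ≤ x
def isMax (m : ℤ) : Prop := ∀ x, blkMem P m x → x ≤ m
def Eset : Set ℤ := {e | ∃ q, e = 2*q ∧ isMin P q}
def Oset : Set ℤ := {o | ∃ m, o = 2*m+1 ∧ isMax P m}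
def Adj (p q : ℤ) : Prop := blkMem P p q ∧ p < q ∧ ∀ x, blkMem P p x → ¬(p < x ∧ x < q)
def bal (e o : ℤ) : Prop := cnt (Eset P) e (o-1) = cnt (Oset P) e (o-1)
def pnr (e o : ℤ) : Prop := o ∈ Oset P ∧ e < o ∧ bal P e o ∧
  ∀ o', o' ∈ Oset P → e < o' → bal P e o' → o ≤ o'
def H0 : Set (ℤ × ℤ) :=
  {a | (∃ p q, a = ((2*q, 2*p+1) : ℤ × ℤ) ∧ Adj P p q) ∨
       (∃ e o, a = ((o, e) : ℤ × ℤ) ∧ e ∈ Eset P ∧ pnr P e o)}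

variable {P}

lemma blkMem_refl (hP : IsPartition P) (x : ℤ) : blkMem P x x := by
  obtain ⟨B, ⟨hB, hx⟩, -⟩ := hP.2 x
  exact ⟨B, hB, hx, hx⟩

lemma blkMem_symm {x y : ℤ} (h : blkMem P x y) : blkMem P y x := by
  obtain ⟨B, hB, hx, hy⟩ := h; exact ⟨B, hB, hy, hx⟩

lemma blkMem_trans (hP : IsPartition P) {x y z : ℤ} (h1 : blkMem P x y)
    (h2 : blkMem P y z) : blkMem P x z := by
  obtain ⟨B, hB, hx, hy⟩ := h1
  obtain ⟨B', hB', hy', hz⟩ := h2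
  obtain ⟨C, -, hCuniq⟩ := hP.2 y
  have e1 : B = C := hCuniq B ⟨hB, hy⟩
  have e2 : B' = C := hCuniq B' ⟨hB', hy'⟩
  exact ⟨B, hB, hx, by rw [e1, ← e2]; exact hz⟩

lemma EO_disj : Disjoint (Eset P) (Oset P) := by
  refine Set.disjoint_left.2 ?_
  rintro x ⟨q, rfl, -⟩ ⟨m, hm, -⟩
  omega

lemma isMin_unique (hP : IsPartition P) {q q' m : ℤ} (h1 : isMin P q) (h2 : blkMem P q m)
    (h3 : isMin P q') (h4 : blkMem P q' m) : q = q' := by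
  have h5 : blkMem P q q' := blkMem_trans hP h2 (blkMem_symm h4)
  exact le_antisymm (h1 _ h5) (h3 _ (blkMem_symm h5))

lemma isMax_unique (hP : IsPartition P) {q q' m : ℤ} (h1 : isMax P q) (h2 : blkMem P q m)
    (h3 : isMax P q') (h4 : blkMem P q' m) : q = q' := by
  have h5 : blkMem P q q' := blkMem_trans hP h2 (blkMem_symm h4)
  exact le_antisymm (h3 _ (blkMem_symm h5)) (h1 _ h5)

lemma exists_min_of_bdd (hP : IsPartition P) {m b : ℤ} (hb : ∀ z, blkMem P m z → b ≤ z) :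
    ∃ q, isMin P q ∧ blkMem P q m := by
  obtain ⟨lb, hlb1, hlb2⟩ := Int.exists_least_of_bdd (P := fun z => blkMem P m z)
    ⟨b, fun z hz => hb z hz⟩ ⟨m, blkMem_refl hP m⟩
  refine ⟨lb, fun x hx => ?_, blkMem_symm hlb1⟩
  exact hlb2 x (blkMem_trans hP hlb1 hx)

lemma exists_max_of_bdd (hP : IsPartition P) {m b : ℤ} (hb : ∀ z, blkMem P m z → z ≤ b) :
    ∃ q, isMax P q ∧ blkMem P q m := by
  obtain ⟨ub, hub1, hub2⟩ := Int.exists_greatest_of_bdd (P := fun z => blkMem P m z)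
    ⟨b, fun z hz => hb z hz⟩ ⟨m, blkMem_refl hP m⟩
  refine ⟨ub, fun x hx => ?_, blkMem_symm hub1⟩
  exact hub2 x (blkMem_trans hP hub1 hx)

noncomputable def blkMin (P : Set (Set ℤ)) (m : ℤ) : ℤ :=
  if h : ∃ q, isMin P q ∧ blkMem P q m then h.choose else 0

lemma blkMin_spec {m : ℤ} (h : ∃ q, isMin P q ∧ blkMem P q m) :
    isMin P (blkMin P m) ∧ blkMem P (blkMin P m) m := by
  rw [blkMin, dif_pos h]; exact h.choose_spec

noncomputable def blkMax (P : Set (Set ℤ)) (m : ℤ) : ℤ :=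
  if h : ∃ q, isMax P q ∧ blkMem P q m then h.choose else 0

lemma blkMax_spec {m : ℤ} (h : ∃ q, isMax P q ∧ blkMem P q m) :
    isMax P (blkMax P m) ∧ blkMem P (blkMax P m) m := by
  rw [blkMax, dif_pos h]; exact h.choose_spec

lemma confine (hP : IsPartition P) (hNC : Noncrossing P) {a c x y : ℤ}
    (hac : blkMem P a c) (hax : ¬ blkMem P a x)
    (h1 : a < x) (h2 : x < c) (hxy : blkMem P x y) : a < y ∧ y < c := by
  obtain ⟨B, hB, haB, hcB⟩ := hac
  obtain ⟨B', hB', hxB', hyB'⟩ := hxy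
  have hxB : x ∉ B := fun h => hax ⟨B, hB, haB, h⟩
  have hne : B' ≠ B := fun h => hxB (h ▸ hxB')
  by_contra hcon
  push_neg at hcon
  rcases lt_trichotomy y a with hy | hy | hy
  · exact hNC ⟨y, a, x, c, hy, h1, h2, B', hB', B, hB, hne, hyB', hxB', haB, hcB⟩
  · exact hax ⟨B', hB', hy ▸ hyB', hxB'⟩
  · have hyc : c ≤ y := hcon hy
    rcases eq_or_lt_of_le hyc with hy2 | hy2
    · exact hax ⟨B, hB, haB, by
        have : y ∈ B := hy2 ▸ hcB
        -- x and y in B' and y = c ∈ B ⇒ contradiction via uniqueness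
        obtain ⟨C, -, hCuniq⟩ := hP.2 y
        have e1 : B = C := hCuniq B ⟨hB, this⟩
        have e2 : B' = C := hCuniq B' ⟨hB', hyB'⟩
        rw [e1, ← e2]; exact hxB'⟩
    · exact hNC ⟨a, x, c, y, h1, h2, hy2, B, hB, B', hB', (Ne.symm hne), haB, hcB, hxB', hyB'⟩

lemma confine_above (hP : IsPartition P) (hNC : Noncrossing P) {m₂ x y : ℤ}
    (hub : ∀ b : ℤ, ∃ z, blkMem P m₂ z ∧ z < b)
    (hx : ¬ blkMem P m₂ x) (h1 : x < m₂) (hxy : blkMem P x y) : y < m₂ := by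
  by_contra hcon
  push_neg at hcon
  rcases eq_or_lt_of_le hcon with hy | hy
  · exact hx (blkMem_symm (blkMem_trans hP hxy (hy ▸ blkMem_refl hP y)))
  · obtain ⟨z, hz1, hz2⟩ := hub x
    obtain ⟨B, hB, hmB, hzB⟩ := hz1
    obtain ⟨B', hB', hxB', hyB'⟩ := hxy
    have hxB : x ∉ B := fun h => hx ⟨B, hB, hmB, h⟩
    have hne : B' ≠ B := fun h => hxB (h ▸ hxB')
    exact hNC ⟨z, x, m₂, y, hz2, h1, hy, B, hB, B', hB', Ne.symm hne, hzB, hmB, hxB', hyB'⟩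

lemma confine_below (hP : IsPartition P) (hNC : Noncrossing P) {q₁ x y : ℤ}
    (hlb : ∀ b : ℤ, ∃ z, blkMem P q₁ z ∧ b < z)
    (hx : ¬ blkMem P q₁ x) (h1 : q₁ < x) (hxy : blkMem P x y) : q₁ < y := by
  by_contra hcon
  push_neg at hcon
  rcases eq_or_lt_of_le hcon with hy | hy
  · exact hx (blkMem_symm (blkMem_trans hP hxy (by rw [hy]; exact blkMem_refl hP q₁)))
  · obtain ⟨z, hz1, hz2⟩ := hlb x
    obtain ⟨B, hB, hmB, hzB⟩ := hz1
    obtain ⟨B', hB', hxB', hyB'⟩ := hxy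
    have hxB : x ∉ B := fun h => hx ⟨B, hB, hmB, h⟩
    have hne : B' ≠ B := fun h => hxB (h ▸ hxB')
    exact hNC ⟨y, q₁, x, z, hy, h1, hz2, B', hB', B, hB, hne, hyB', hxB', hmB, hzB⟩

end Partition

/-! ### Counting lemmas -/

section Counting
variable {P : Set (Set ℤ)}

lemma bal_min_max (hP : IsPartition P) (hNC : Noncrossing P) {q M : ℤ}
    (hq : isMin P q) (hM : isMax P M) (hqM : blkMem P q M) :
    bal P (2*q) (2*M+1) := by
  have hqleM : q ≤ M := hq _ hqM
  unfold bal
  have h21 : 2*M+1-1 = 2*M := by omega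
  rw [h21]
  refine le_antisymm ?_ ?_
  · -- cnt E ≤ cnt O via g := mins ↦ maxes
    refine ncard_le_of_inj (fun e' => 2 * blkMax P (e'/2) + 1) ?_ ?_ (cnt_finite _ _ _)
    · rintro e' ⟨⟨q', rfl, hq'min⟩, he1, he2⟩
      have hq'2 : (2*q')/2 = q' := by omega
      rw [hq'2]
      have hqq' : q < q' := by omega
      have hq'M : q' < M := by
        rcases eq_or_lt_of_le (show q' ≤ M by omega) with h | h
        · exfalso; subst h; exact absurd (hq'min q (blkMem_symm hqM)) (by omega)
        · exact h
      have hax : ¬ blkMem P q q' := fun h => absurd (hq'min q (blkMem_symm h)) (by omega)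
      have hbdd : ∀ z, blkMem P q' z → z ≤ M - 1 := fun z hz => by
        have := confine hP hNC hqM hax hqq' hq'M hz; omega
      have hex := exists_max_of_bdd hP hbdd
      obtain ⟨hmax, hmem⟩ := blkMax_spec hex
      have h1 : q' ≤ blkMax P q' := hmax _ hmem
      have h2 := confine hP hNC hqM hax hqq' hq'M (blkMem_symm hmem)
      refine ⟨⟨blkMax P q', rfl, hmax⟩, by omega, by omega⟩
    · rintro e1 ⟨⟨q1, rfl, hq1⟩, he1⟩ e2 ⟨⟨q2, rfl, hq2⟩, he2⟩ heq
      simp only [Set.mem_Ioc] at he1 he2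
      have hq12 : (2*q1)/2 = q1 := by omega
      have hq22 : (2*q2)/2 = q2 := by omega
      simp only [hq12, hq22] at heq
      -- blkMax q1 = blkMax q2
      have hax1 : ¬ blkMem P q q1 := fun h => absurd (hq1 q (blkMem_symm h)) (by omega)
      have hbdd1 : ∀ z, blkMem P q1 z → z ≤ M - 1 := fun z hz => by
        have hq1M : q1 < M := by
          rcases eq_or_lt_of_le (show q1 ≤ M by omega) with h | h
          · exfalso; subst h; exact absurd (hq1 q (blkMem_symm hqM)) (by omega)
          · exact h
        have := confine hP hNC hqM hax1 (by omega) hq1M hz; omega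
      obtain ⟨hmax1, hmem1⟩ := blkMax_spec (exists_max_of_bdd hP hbdd1)
      have hax2 : ¬ blkMem P q q2 := fun h => absurd (hq2 q (blkMem_symm h)) (by omega)
      have hbdd2 : ∀ z, blkMem P q2 z → z ≤ M - 1 := fun z hz => by
        have hq2M : q2 < M := by
          rcases eq_or_lt_of_le (show q2 ≤ M by omega) with h | h
          · exfalso; subst h; exact absurd (hq2 q (blkMem_symm hqM)) (by omega)
          · exact h
        have := confine hP hNC hqM hax2 (by omega) hq2M hz; omega
      obtain ⟨hmax2, hmem2⟩ := blkMax_spec (exists_max_of_bdd hP hbdd2)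
      have heqM : blkMax P q1 = blkMax P q2 := by omega
      have hblk : blkMem P q1 q2 :=
        blkMem_trans hP (blkMem_symm hmem1) (heqM ▸ hmem2)
      have := isMin_unique hP hq1 (blkMem_refl hP q1) hq2 (blkMem_symm hblk)
      omega
  · -- cnt O ≤ cnt E via f := maxes ↦ mins
    refine ncard_le_of_inj (fun o' => 2 * blkMin P ((o'-1)/2)) ?_ ?_ (cnt_finite _ _ _)
    · rintro o' ⟨⟨m', rfl, hm'max⟩, he1, he2⟩
      have hm'2 : (2*m'+1-1)/2 = m' := by omega
      rw [hm'2]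
      have hqm' : q < m' := by
        rcases eq_or_lt_of_le (show q ≤ m' by omega) with h | h
        · exfalso; subst h; exact absurd (hm'max M hqM) (by omega)
        · exact h
      have hm'M : m' < M := by omega
      have hax : ¬ blkMem P q m' := fun h => absurd (hm'max M (blkMem_trans hP (blkMem_symm h) hqM)) (by omega)
      have hbdd : ∀ z, blkMem P m' z → q + 1 ≤ z := fun z hz => by
        have := confine hP hNC hqM hax hqm' hm'M hz; omega
      obtain ⟨hmin, hmem⟩ := blkMin_spec (exists_min_of_bdd hP hbdd)
      have h1 : blkMin P m' ≤ m' := hmin _ hmem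
      have h2 := confine hP hNC hqM hax hqm' hm'M (blkMem_symm hmem)
      refine ⟨⟨blkMin P m', rfl, hmin⟩, by omega, by omega⟩
    · rintro o1 ⟨⟨m1, rfl, hm1⟩, he1⟩ o2 ⟨⟨m2, rfl, hm2⟩, he2⟩ heq
      simp only [Set.mem_Ioc] at he1 he2
      have h12 : (2*m1+1-1)/2 = m1 := by omega
      have h22 : (2*m2+1-1)/2 = m2 := by omega
      simp only [h12, h22] at heq
      have hax1 : ¬ blkMem P q m1 := fun h => absurd (hm1 M (blkMem_trans hP (blkMem_symm h) hqM)) (by omega)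
      have hqm1 : q < m1 := by
        rcases eq_or_lt_of_le (show q ≤ m1 by omega) with h | h
        · exfalso; subst h; exact absurd (hm1 M hqM) (by omega)
        · exact h
      have hbdd1 : ∀ z, blkMem P m1 z → q + 1 ≤ z := fun z hz => by
        have := confine hP hNC hqM hax1 hqm1 (by omega) hz; omega
      obtain ⟨hmin1, hmem1⟩ := blkMin_spec (exists_min_of_bdd hP hbdd1)
      have hax2 : ¬ blkMem P q m2 := fun h => absurd (hm2 M (blkMem_trans hP (blkMem_symm h) hqM)) (by omega)
      have hqm2 : q < m2 := by
        rcases eq_or_lt_of_le (show q ≤ m2 by omega) with h | h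
        · exfalso; subst h; exact absurd (hm2 M hqM) (by omega)
        · exact h
      have hbdd2 : ∀ z, blkMem P m2 z → q + 1 ≤ z := fun z hz => by
        have := confine hP hNC hqM hax2 hqm2 (by omega) hz; omega
      obtain ⟨hmin2, hmem2⟩ := blkMin_spec (exists_min_of_bdd hP hbdd2)
      have heqm : blkMin P m1 = blkMin P m2 := by omega
      have hblk : blkMem P m1 m2 :=
        blkMem_trans hP (blkMem_symm hmem1) (heqm ▸ hmem2)
      have := isMax_unique hP hm1 (blkMem_refl hP m1) hm2 (blkMem_symm hblk)
      omega

/-- Strict excess of leftover evens below an odd leftover, when every block-max in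
range has its min in range, and the top's own min is in range. -/
lemma cnt_lt_maxes (hP : IsPartition P) {base m'' : ℤ} (hm'' : isMax P m'')
    (hbase : base < 2*m''+1)
    (Hblk : ∀ m', isMax P m' → base < 2*m'+1 → 2*m'+1 < 2*m''+1 →
      ∃ q', isMin P q' ∧ blkMem P q' m' ∧ base < 2*q')
    (Hm : ∃ q, isMin P q ∧ blkMem P q m'' ∧ base < 2*q) :
    cnt (Oset P) base (2*m''+1-1) < cnt (Eset P) base (2*m''+1-1) := by
  obtain ⟨q'', hq''min, hq''mem, hq''base⟩ := Hm
  have hq''le : q'' ≤ m'' := hq''min _ hq''mem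
  refine ncard_lt_of_inj_extra (fun o' => 2 * blkMin P ((o'-1)/2)) ?_ ?_ (2*q'')
    ⟨⟨q'', rfl, hq''min⟩, by simp only [Set.mem_Ioc]; omega⟩ ?_ (cnt_finite _ _ _)
  · rintro o' ⟨⟨m', rfl, hm'max⟩, he1, he2⟩
    have hm'2 : (2*m'+1-1)/2 = m' := by omega
    rw [hm'2]
    obtain ⟨q', hq'min, hq'mem, hq'base⟩ := Hblk m' hm'max (by omega) (by omega)
    have huniq : q' = blkMin P m' := isMin_unique hP hq'min hq'mem
      (blkMin_spec ⟨q', hq'min, hq'mem⟩).1 (blkMin_spec ⟨q', hq'min, hq'mem⟩).2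
    have hle : q' ≤ m' := hq'min _ hq'mem
    refine ⟨⟨blkMin P m', rfl, (blkMin_spec ⟨q', hq'min, hq'mem⟩).1⟩, by omega, by omega⟩
  · rintro o1 ⟨⟨m1, rfl, hm1⟩, he1⟩ o2 ⟨⟨m2, rfl, hm2⟩, he2⟩ heq
    simp only [Set.mem_Ioc] at he1 he2
    have h12 : (2*m1+1-1)/2 = m1 := by omega
    have h22 : (2*m2+1-1)/2 = m2 := by omega
    simp only [h12, h22] at heq
    obtain ⟨q1, hq1min, hq1mem, hq1b⟩ := Hblk m1 hm1 (by omega) (by omega)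
    obtain ⟨q2, hq2min, hq2mem, hq2b⟩ := Hblk m2 hm2 (by omega) (by omega)
    have e1 : q1 = blkMin P m1 := isMin_unique hP hq1min hq1mem
      (blkMin_spec ⟨q1, hq1min, hq1mem⟩).1 (blkMin_spec ⟨q1, hq1min, hq1mem⟩).2
    have e2 : q2 = blkMin P m2 := isMin_unique hP hq2min hq2mem
      (blkMin_spec ⟨q2, hq2min, hq2mem⟩).1 (blkMin_spec ⟨q2, hq2min, hq2mem⟩).2
    have hq12 : q1 = q2 := by omega
    have hblk : blkMem P m1 m2 :=
      blkMem_trans hP (blkMem_symm hq1mem) (hq12 ▸ hq2mem)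
    have := isMax_unique hP hm1 (blkMem_refl hP m1) hm2 (blkMem_symm hblk)
    omega
  · rintro o' ⟨⟨m', rfl, hm'max⟩, he1⟩ heq
    simp only [Set.mem_Ioc] at he1
    have hm'2 : (2*m'+1-1)/2 = m' := by omega
    simp only [hm'2] at heq
    obtain ⟨q', hq'min, hq'mem, hq'b⟩ := Hblk m' hm'max (by omega) (by omega)
    have e1 : q' = blkMin P m' := isMin_unique hP hq'min hq'mem
      (blkMin_spec ⟨q', hq'min, hq'mem⟩).1 (blkMin_spec ⟨q', hq'min, hq'mem⟩).2
    have hq'q'' : q' = q'' := by omega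
    have hblk : blkMem P m' m'' :=
      blkMem_trans hP (blkMem_symm hq'mem) (hq'q'' ▸ hq''mem)
    have := isMax_unique hP hm'max (blkMem_refl hP m') hm'' (blkMem_symm hblk)
    omega

/-- Mirror: strict excess of leftover odds, base even, top odd `w`. -/
lemma cnt_lt_mins (hP : IsPartition P) {base w : ℤ} (hbw : base ≤ w - 1)
    (Hblk : ∀ q', isMin P q' → base < 2*q' → 2*q' ≤ w - 1 →
      ∃ m', isMax P m' ∧ blkMem P q' m' ∧ 2*m'+1 ≤ w - 1)
    (Hextra : ∃ m₃, isMax P m₃ ∧ base < 2*m₃+1 ∧ 2*m₃+1 ≤ w - 1 ∧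
      ∀ q', isMin P q' → blkMem P q' m₃ → ¬ base < 2*q') :
    cnt (Eset P) base (w-1) < cnt (Oset P) base (w-1) := by
  obtain ⟨m₃, hm₃max, hm₃1, hm₃2, hm₃not⟩ := Hextra
  refine ncard_lt_of_inj_extra (fun e' => 2 * blkMax P (e'/2) + 1) ?_ ?_ (2*m₃+1)
    ⟨⟨m₃, rfl, hm₃max⟩, by simp only [Set.mem_Ioc]; omega⟩ ?_ (cnt_finite _ _ _)
  · rintro e' ⟨⟨q', rfl, hq'min⟩, he1, he2⟩
    have hq'2 : (2*q')/2 = q' := by omega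
    rw [hq'2]
    obtain ⟨m', hm'max, hm'mem, hm'b⟩ := Hblk q' hq'min (by omega) (by omega)
    have e1 : m' = blkMax P q' := isMax_unique hP hm'max (blkMem_symm hm'mem)
      (blkMax_spec ⟨m', hm'max, blkMem_symm hm'mem⟩).1 (blkMax_spec ⟨m', hm'max, blkMem_symm hm'mem⟩).2
    have hle : q' ≤ m' := hm'max _ (blkMem_symm hm'mem)
    refine ⟨⟨blkMax P q', rfl, (blkMax_spec ⟨m', hm'max, blkMem_symm hm'mem⟩).1⟩, by omega, by omega⟩
  · rintro e1' ⟨⟨q1, rfl, hq1⟩, he1⟩ e2' ⟨⟨q2, rfl, hq2⟩, he2⟩ heq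
    simp only [Set.mem_Ioc] at he1 he2
    have h12 : (2*q1)/2 = q1 := by omega
    have h22 : (2*q2)/2 = q2 := by omega
    simp only [h12, h22] at heq
    obtain ⟨m1, hm1max, hm1mem, hm1b⟩ := Hblk q1 hq1 (by omega) (by omega)
    obtain ⟨m2, hm2max, hm2mem, hm2b⟩ := Hblk q2 hq2 (by omega) (by omega)
    have e1 : m1 = blkMax P q1 := isMax_unique hP hm1max (blkMem_symm hm1mem)
      (blkMax_spec ⟨m1, hm1max, blkMem_symm hm1mem⟩).1 (blkMax_spec ⟨m1, hm1max, blkMem_symm hm1mem⟩).2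
    have e2 : m2 = blkMax P q2 := isMax_unique hP hm2max (blkMem_symm hm2mem)
      (blkMax_spec ⟨m2, hm2max, blkMem_symm hm2mem⟩).1 (blkMax_spec ⟨m2, hm2max, blkMem_symm hm2mem⟩).2
    have hm12 : m1 = m2 := by omega
    have hblk : blkMem P q1 q2 :=
      blkMem_trans hP hm1mem (blkMem_symm (hm12 ▸ hm2mem))
    have := isMin_unique hP hq1 (blkMem_refl hP q1) hq2 (blkMem_symm hblk)
    omega
  · rintro e' ⟨⟨q', rfl, hq'min⟩, he1⟩ heq
    simp only [Set.mem_Ioc] at he1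
    have hq'2 : (2*q')/2 = q' := by omega
    simp only [hq'2] at heq
    obtain ⟨m', hm'max, hm'mem, hm'b⟩ := Hblk q' hq'min (by omega) (by omega)
    have e1 : m' = blkMax P q' := isMax_unique hP hm'max (blkMem_symm hm'mem)
      (blkMax_spec ⟨m', hm'max, blkMem_symm hm'mem⟩).1 (blkMax_spec ⟨m', hm'max, blkMem_symm hm'mem⟩).2
    have hm'm₃ : m' = m₃ := by omega
    exact hm₃not q' hq'min (hm'm₃ ▸ hm'mem) (by omega)

end Counting

/-! ### Partner lemmas -/

section Partner
variable {P : Set (Set ℤ)}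

lemma cnt_last (s : Set ℤ) {e x : ℤ} (h : e ≤ x - 1) :
    cnt s e x = cnt s e (x-1) + (if x ∈ s then 1 else 0) := by
  have := cnt_succ s (y := x - 1) (e := e) h
  have hx : x - 1 + 1 = x := by omega
  rw [hx] at this
  exact this

/-- In a walk with no balanced point `≤ X`, odd-count never exceeds even-count. -/
lemma pnr_walk (hpnr : ∀ o', o' ∈ Oset P → ∀ e : ℤ, True) : True := trivial

lemma pnr_right_unique {e o o' : ℤ} (h1 : pnr P e o) (h2 : pnr P e o') : o = o' :=
  le_antisymm (h1.2.2.2 o' h2.1 h2.2.1 h2.2.2.1) (h2.2.2.2 o h1.1 h1.2.1 h1.2.2.1)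

lemma cnt_mem_max {s : Set ℤ} {e x : ℤ} (h : 1 ≤ cnt s e x) :
    ∃ o₀ ∈ s, e < o₀ ∧ o₀ ≤ x ∧ ∀ z ∈ s, e < z → z ≤ x → z ≤ o₀ := by
  have hne : (s ∩ Set.Ioc e x).Nonempty := by
    rw [← Set.ncard_pos (cnt_finite s e x)]
    unfold cnt at h; omega
  obtain ⟨o₀, ho₀, hmax⟩ := Set.Finite.exists_maximalFor id _ (cnt_finite s e x) hne
  obtain ⟨ho₀s, ho₀1, ho₀2⟩ : o₀ ∈ s ∧ e < o₀ ∧ o₀ ≤ x := ⟨ho₀.1, ho₀.2.1, ho₀.2.2⟩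
  refine ⟨o₀, ho₀s, ho₀1, ho₀2, fun z hz h1 h2 => ?_⟩
  by_contra hlt
  push_neg at hlt
  have := hmax (j := z) ⟨hz, h1, h2⟩ (le_of_lt hlt)
  simp only [id_eq] at this
  omega

/-- two distinct leftover evens cannot have the same partner -/
lemma pnr_inj (hP : IsPartition P) {e e' o : ℤ} (he' : e' ∈ Eset P)
    (h1 : pnr P e o) (he'o : e' < o) (hbal' : bal P e' o) (hlt : e < e') : False := by
  obtain ⟨hoO, heo, hbal, hmin⟩ := h1
  -- split counts at e'
  have hsplE : cnt (Eset P) e (o-1) = cnt (Eset P) e e' + cnt (Eset P) e' (o-1) :=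
    cnt_split _ (by omega) (by omega)
  have hsplO : cnt (Oset P) e (o-1) = cnt (Oset P) e e' + cnt (Oset P) e' (o-1) :=
    cnt_split _ (by omega) (by omega)
  unfold bal at hbal hbal'
  have hEe' : cnt (Eset P) e e' = cnt (Oset P) e e' := by omega
  have hE1 : 1 ≤ cnt (Eset P) e e' := cnt_pos _ he' hlt le_rfl
  obtain ⟨o₀, ho₀O, ho₀1, ho₀2, ho₀max⟩ := cnt_mem_max (s := Oset P) (e := e) (x := e') (by omega)
  have ho₀e' : o₀ < e' := by
    rcases eq_or_lt_of_le ho₀2 with h | h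
    · exact absurd (h ▸ ho₀O) (fun hmem => Set.disjoint_left.1 EO_disj he' hmem)
    · exact h
  -- walk bound up to o₀ - 1
  have hwalk := walk_le (Eset P) (Oset P) EO_disj
    (e := e) (X := o₀ - 1)
    (fun o'' h1 h2 h3 => by
      intro hbb
      have := hmin o'' h1 h2 hbb
      omega) (o₀ - 1) (by omega) le_rfl
  have hnotbal : cnt (Eset P) e (o₀-1) ≠ cnt (Oset P) e (o₀-1) := by
    intro hbb
    have := hmin o₀ ho₀O ho₀1 hbb
    omega
  -- counts up to e'
  have hsplit2 : cnt (Oset P) e e' = cnt (Oset P) e o₀ + cnt (Oset P) o₀ e' :=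
    cnt_split _ (by omega) (by omega)
  have hzero : cnt (Oset P) o₀ e' = 0 := by
    unfold cnt
    rw [Set.ncard_eq_zero (cnt_finite _ _ _)]
    ext z
    simp only [Set.mem_inter_iff, Set.mem_Ioc, Set.mem_empty_iff_false, iff_false]
    rintro ⟨hz, hz1, hz2⟩
    exact absurd (ho₀max z hz (by omega) (by omega)) (by omega)
  have hlast : cnt (Oset P) e o₀ = cnt (Oset P) e (o₀-1) + 1 := by
    rw [cnt_last _ (by omega)]
    simp [ho₀O]
  have hsplit3 : cnt (Eset P) e e' = cnt (Eset P) e (o₀-1) + cnt (Eset P) (o₀-1) e' :=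
    cnt_split _ (by omega) (by omega)
  have hEe'2 : 1 ≤ cnt (Eset P) (o₀-1) e' := cnt_pos _ he' (by omega) le_rfl
  omega

/-- two negative arcs cannot cross -/
lemma pnr_nocross (hP : IsPartition P) {e e' o o' : ℤ}
    (h1 : pnr P e o) (h2 : pnr P e' o')
    (hee' : e < e') (he'o : e' < o) (hoo' : o < o') : False := by
  obtain ⟨hoO, heo, hbal, hmin⟩ := h1
  obtain ⟨ho'O, he'o', hbal', hmin'⟩ := h2
  by_cases hb : bal P e' o
  · exact absurd (hmin' o hoO he'o hb) (by omega)
  · unfold bal at hbal hbal' hb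
    have hsplE : cnt (Eset P) e (o-1) = cnt (Eset P) e e' + cnt (Eset P) e' (o-1) :=
      cnt_split _ (by omega) (by omega)
    have hsplO : cnt (Oset P) e (o-1) = cnt (Oset P) e e' + cnt (Oset P) e' (o-1) :=
      cnt_split _ (by omega) (by omega)
    have hwalk := walk_le (Eset P) (Oset P) EO_disj
      (e := e) (X := e')
      (fun o'' hh1 hh2 hh3 => by
        intro hbb
        have := hmin o'' hh1 hh2 hbb
        omega) e' (by omega) le_rfl
    have hdip : cnt (Eset P) e' (o-1) < cnt (Oset P) e' (o-1) := by omega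
    obtain ⟨o'', ho''O, ho''1, ho''2, ho''bal⟩ :=
      walk_dip (Eset P) (Oset P) EO_disj (e := e') (x := o - 1) (by omega) hdip
    exact absurd (hmin' o'' ho''O ho''1 ho''bal) (by omega)

end Partner

/-! ### The canonical configuration `H0` -/

section H0sec
variable {P : Set (Set ℤ)}

lemma adj_right_unique (hP : IsPartition P) {p q q' : ℤ} (h1 : Adj P p q)
    (h2 : Adj P p q') : q = q' := by
  rcases lt_trichotomy q q' with h | h | h
  · exact absurd ⟨h1.2.1, h⟩ (h2.2.2 q h1.1)
  · exact h
  · exact absurd ⟨h2.2.1, h⟩ (h1.2.2 q' h2.1)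

lemma adj_left_unique (hP : IsPartition P) {p p' q : ℤ} (h1 : Adj P p q)
    (h2 : Adj P p' q) : p = p' := by
  rcases lt_trichotomy p p' with h | h | h
  · exact absurd ⟨h, h2.2.1⟩
      (h1.2.2 p' (blkMem_trans hP h1.1 (blkMem_symm h2.1)))
  · exact h
  · exact absurd ⟨h, h1.2.1⟩
      (h2.2.2 p (blkMem_trans hP h2.1 (blkMem_symm h1.1)))

lemma pos_pos_nocross (hP : IsPartition P) (hNC : Noncrossing P) {p q p' q' : ℤ}
    (h1 : Adj P p q) (h2 : Adj P p' q')
    (ha : p < p') (hb : p' < q) (hc : q < q') : False := by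
  by_cases hmem : blkMem P p p'
  · exact absurd ⟨ha, hb⟩ (h1.2.2 p' hmem)
  · obtain ⟨B, hB, hpB, hqB⟩ := h1.1
    obtain ⟨B', hB', hpB', hqB'⟩ := h2.1
    have hne : B ≠ B' := fun h => hmem ⟨B, hB, hpB, h ▸ hpB'⟩
    exact hNC ⟨p, p', q, q', ha, hb, hc, B, hB, B', hB', hne, hpB, hqB, hpB', hqB'⟩

lemma pos_neg_nocross1 (hP : IsPartition P) (hNC : Noncrossing P) {p q e o : ℤ}
    (hadj : Adj P p q) (hpnr : pnr P e o)
    (ha : e < 2*p+1) (hb : 2*p+1 < o) (hc : o < 2*q) : False := by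
  obtain ⟨hoO, heo, hbal, hmin⟩ := hpnr
  obtain ⟨m, rfl, hmmax⟩ := hoO
  have hpm : p < m := by omega
  have hmq : m < q := by omega
  have hpq : p < q := hadj.2.1
  -- auxiliary: any block-max strictly between 2p+1 and 2m+1 has its min above 2p+1
  have Hblk : ∀ m', isMax P m' → (2*p+1 : ℤ) < 2*m'+1 → 2*m'+1 ≤ 2*m+1 →
      ∃ q', isMin P q' ∧ blkMem P q' m' ∧ (2*p+1 : ℤ) < 2*q' := by
    intro m' hm' hm'1 hm'2
    have hpm' : p < m' := by omega
    have hm'q : m' < q := by omega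
    have hax : ¬ blkMem P p m' := fun h => absurd ⟨hpm', hm'q⟩ (hadj.2.2 m' h)
    have hbdd : ∀ z, blkMem P m' z → p + 1 ≤ z := fun z hz => by
      have := confine hP hNC hadj.1 hax hpm' hm'q hz; omega
    obtain ⟨q', hq'min, hq'mem⟩ := exists_min_of_bdd hP hbdd
    exact ⟨q', hq'min, hq'mem, by have := hbdd q' (blkMem_symm hq'mem); omega⟩
  have hcnt := cnt_lt_maxes hP (base := 2*p+1) hmmax (by omega)
    (fun m' h1 h2 h3 => Hblk m' h1 h2 (by omega))
    (by
      obtain ⟨q', hq'min, hq'mem, hq'b⟩ := Hblk m hmmax (by omega) le_rfl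
      exact ⟨q', hq'min, hq'mem, hq'b⟩)
  -- now derive a dip for e before 2p+1
  unfold bal at hbal
  have hsplE : cnt (Eset P) e (2*m+1-1) =
      cnt (Eset P) e (2*p+1) + cnt (Eset P) (2*p+1) (2*m+1-1) :=
    cnt_split _ (by omega) (by omega)
  have hsplO : cnt (Oset P) e (2*m+1-1) =
      cnt (Oset P) e (2*p+1) + cnt (Oset P) (2*p+1) (2*m+1-1) :=
    cnt_split _ (by omega) (by omega)
  have hdip : cnt (Eset P) e (2*p+1) < cnt (Oset P) e (2*p+1) := by omega
  obtain ⟨o'', ho''O, ho''1, ho''2, ho''bal⟩ :=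
    walk_dip (Eset P) (Oset P) EO_disj (e := e) (x := 2*p+1) (by omega) hdip
  exact absurd (hmin o'' ho''O ho''1 ho''bal) (by omega)

lemma pos_neg_nocross2 (hP : IsPartition P) (hNC : Noncrossing P) {p q e o : ℤ}
    (hadj : Adj P p q) (he : e ∈ Eset P) (hpnr : pnr P e o)
    (ha : 2*p+1 < e) (hb : e < 2*q) (hc : 2*q < o) : False := by
  obtain ⟨hoO, heo, hbal, hmin⟩ := hpnr
  obtain ⟨q'', rfl, hq''min⟩ := he
  have hpq'' : p < q'' := by omega
  have hq''q : q'' < q := by omega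
  have hax : ¬ blkMem P p q'' := fun h =>
    absurd (hq''min p (blkMem_symm h)) (by omega)
  have hbdd : ∀ z, blkMem P q'' z → z ≤ q - 1 := fun z hz => by
    have := confine hP hNC hadj.1 hax hpq'' hq''q hz; omega
  obtain ⟨M'', hM''max, hM''mem⟩ := exists_max_of_bdd hP hbdd
  have hM''1 : q'' ≤ M'' := hM''max q'' hM''mem
  have hM''2 : M'' ≤ q - 1 := hbdd M'' (blkMem_symm hM''mem)
  have hb2 := bal_min_max hP hNC hq''min hM''max (blkMem_symm hM''mem)

  exact absurd (hmin (2*M''+1) ⟨M'', rfl, hM''max⟩ (by omega) hb2) (by omega)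

/-- `H0 P` is a noncrossing collection. -/
lemma H0_nccoll (hP : IsPartition P) (hNC : Noncrossing P) : NCColl (H0 P) := by
  constructor
  · rintro a (⟨p, q, rfl, hadj⟩ | ⟨e, o, rfl, he, hpnr⟩)
    · have hpq := hadj.2.1
      refine ⟨show (0:ℤ) < 2*q - (2*p+1) by omega,
        ⟨q - p - 1, show (2*q : ℤ) - (2*p+1) = 2*(q-p-1)+1 by ring⟩⟩
    · obtain ⟨m, hm, -⟩ := hpnr.1
      obtain ⟨qq, hqq, -⟩ := he
      have heo := hpnr.2.1
      exact ⟨show (0:ℤ) < o - e by omega,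
        ⟨m - qq, show (o : ℤ) - e = 2*(m-qq)+1 by omega⟩⟩
  · rintro a ha b hb hab
    -- reduce to cross and share separately by case analysis
    rcases ha with ⟨p, q, rfl, hadj⟩ | ⟨e, o, rfl, he, hpnr⟩ <;>
      rcases hb with ⟨p', q', rfl, hadj'⟩ | ⟨e', o', rfl, he', hpnr'⟩
    · constructor
      · rintro (⟨h1, h2, h3⟩ | ⟨h1, h2, h3⟩) <;> dsimp only at h1 h2 h3
        · exact pos_pos_nocross hP hNC hadj hadj' (by omega) (by omega) (by omega)
        · exact pos_pos_nocross hP hNC hadj' hadj (by omega) (by omega) (by omega)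
      · rintro (h | h | h | h) <;> dsimp only at h
        · have hq : q = q' := by omega
          subst hq
          exact hab (by rw [adj_left_unique hP hadj hadj'])
        · omega
        · omega
        · have hp : p = p' := by omega
          subst hp
          exact hab (by rw [adj_right_unique hP hadj hadj'])
    · constructor
      · rintro (⟨h1, h2, h3⟩ | ⟨h1, h2, h3⟩) <;> dsimp only at h1 h2 h3
        · exact pos_neg_nocross2 hP hNC hadj he' hpnr' (by omega) (by omega) (by omega)
        · exact pos_neg_nocross1 hP hNC hadj hpnr' (by omega) (by omega) (by omega)
      · rintro (h | h | h | h) <;> dsimp only at h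
        · obtain ⟨m, hm, -⟩ := hpnr'.1; omega
        · obtain ⟨qq, hqq, hqmin⟩ := he'
          have h2 : q = qq := by omega
          subst h2
          have := hadj.2.1
          exact absurd (hqmin p (blkMem_symm hadj.1)) (by omega)
        · obtain ⟨m, hm, hmmax⟩ := hpnr'.1
          have h2 : p = m := by omega
          subst h2
          have := hadj.2.1
          exact absurd (hmmax q hadj.1) (by omega)
        · obtain ⟨qq, hqq, -⟩ := he'; omega
    · constructor
      · rintro (⟨h1, h2, h3⟩ | ⟨h1, h2, h3⟩) <;> dsimp only at h1 h2 h3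
        · exact pos_neg_nocross1 hP hNC hadj' hpnr (by omega) (by omega) (by omega)
        · exact pos_neg_nocross2 hP hNC hadj' he hpnr (by omega) (by omega) (by omega)
      · rintro (h | h | h | h) <;> dsimp only at h
        · obtain ⟨m, hm, -⟩ := hpnr.1; omega
        · obtain ⟨m, hm, hmmax⟩ := hpnr.1
          have h2 : p' = m := by omega
          subst h2
          have := hadj'.2.1
          exact absurd (hmmax q' hadj'.1) (by omega)
        · obtain ⟨qq, hqq, hqmin⟩ := he
          have h2 : q' = qq := by omega
          subst h2
          have := hadj'.2.1
          exact absurd (hqmin p' (blkMem_symm hadj'.1)) (by omega)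
        · obtain ⟨qq, hqq, -⟩ := he; omega
    · constructor
      · rintro (⟨h1, h2, h3⟩ | ⟨h1, h2, h3⟩) <;> dsimp only at h1 h2 h3
        · exact pnr_nocross hP hpnr hpnr' (by omega) (by omega) (by omega)
        · exact pnr_nocross hP hpnr' hpnr (by omega) (by omega) (by omega)
      · rintro (h | h | h | h) <;> dsimp only at h
        · -- o = o'
          have : o = o' := h
          subst this
          rcases lt_trichotomy e e' with hlt | hlt | hlt
          · exact pnr_inj hP he' hpnr hpnr'.2.1 hpnr'.2.2.1 hlt
          · exact hab (by rw [hlt])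
          · exact pnr_inj hP he hpnr' hpnr.2.1 hpnr.2.2.1 hlt
        · obtain ⟨m, hm, -⟩ := hpnr.1
          obtain ⟨qq, hqq, -⟩ := he'; omega
        · obtain ⟨m, hm, -⟩ := hpnr'.1
          obtain ⟨qq, hqq, -⟩ := he; omega
        · have : e = e' := h
          subst this
          exact hab (by rw [pnr_right_unique hpnr hpnr'])

end H0sec

/-! ### Maximality of `H0` and `fmap (H0 P) = P` -/

def Matched (H : Set (ℤ × ℤ)) (x : ℤ) : Prop := ∃ a ∈ H, x = a.1 ∨ x = a.2

section H0max
variable {P : Set (Set ℤ)}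

lemma even_unmatched (hP : IsPartition P) (hNC : Noncrossing P) {q : ℤ}
    (h : ¬ Matched (H0 P) (2*q)) :
    isMin P q ∧ ∀ b : ℤ, ∃ z, blkMem P q z ∧ b < z := by
  have hmin : isMin P q := by
    by_contra hc
    unfold isMin at hc
    push_neg at hc
    obtain ⟨x, hx1, hx2⟩ := hc
    obtain ⟨p, ⟨hp1, hp2⟩, hp3⟩ := Int.exists_greatest_of_bdd
      (P := fun z => blkMem P q z ∧ z < q) ⟨q, fun z hz => le_of_lt hz.2⟩ ⟨x, hx1, by omega⟩
    have hadj : Adj P p q := by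
      refine ⟨blkMem_symm hp1, hp2, fun z hz hzb => ?_⟩
      have : z ≤ p := hp3 z ⟨blkMem_trans hP hp1 hz, hzb.2⟩
      omega
    exact h ⟨(2*q, 2*p+1), Or.inl ⟨p, q, rfl, hadj⟩, Or.inl rfl⟩
  refine ⟨hmin, fun b => ?_⟩
  by_contra hc
  push_neg at hc
  obtain ⟨M, hMmax, hMmem⟩ := exists_max_of_bdd hP (m := q) (b := b)
    (fun z hz => hc z hz)
  have hqM : q ≤ M := hmin M (blkMem_symm hMmem)
  have hbal := bal_min_max hP hNC hmin hMmax (blkMem_symm hMmem)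
  obtain ⟨os, ⟨hos1, hos2, hos3⟩, hos4⟩ := Int.exists_least_of_bdd
    (P := fun o' => o' ∈ Oset P ∧ 2*q < o' ∧ bal P (2*q) o')
    ⟨2*q, fun z hz => le_of_lt hz.2.1⟩ ⟨2*M+1, ⟨M, rfl, hMmax⟩, by omega, hbal⟩
  have hpnr : pnr P (2*q) os := ⟨hos1, hos2, hos3, fun o' h1 h2 h3 => hos4 o' ⟨h1, h2, h3⟩⟩
  exact h ⟨(os, 2*q), Or.inr ⟨2*q, os, rfl, ⟨q, rfl, hmin⟩, hpnr⟩, Or.inr rfl⟩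

lemma odd_unmatched (hP : IsPartition P) (hNC : Noncrossing P) {m : ℤ}
    (h : ¬ Matched (H0 P) (2*m+1)) :
    isMax P m ∧ ∀ b : ℤ, ∃ z, blkMem P m z ∧ z < b := by
  have hmax : isMax P m := by
    by_contra hc
    unfold isMax at hc
    push_neg at hc
    obtain ⟨x, hx1, hx2⟩ := hc
    obtain ⟨s, ⟨hs1, hs2⟩, hs3⟩ := Int.exists_least_of_bdd
      (P := fun z => blkMem P m z ∧ m < z) ⟨m, fun z hz => le_of_lt hz.2⟩ ⟨x, hx1, by omega⟩
    have hadj : Adj P m s := by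
      refine ⟨hs1, hs2, fun z hz hzb => ?_⟩
      have : s ≤ z := hs3 z ⟨hz, hzb.1⟩
      omega
    exact h ⟨(2*s, 2*m+1), Or.inl ⟨m, s, rfl, hadj⟩, Or.inr rfl⟩
  refine ⟨hmax, fun b => ?_⟩
  by_contra hc
  push_neg at hc
  obtain ⟨q₀, hq₀min, hq₀mem⟩ := exists_min_of_bdd hP (m := m) (b := b)
    (fun z hz => hc z hz)
  have hq₀m : q₀ ≤ m := hq₀min m hq₀mem
  have hbal := bal_min_max hP hNC hq₀min hmax hq₀mem
  -- show pnr (2*q₀) (2*m+1) : minimality via cnt_lt_maxes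
  have hpnr : pnr P (2*q₀) (2*m+1) := by
    refine ⟨⟨m, rfl, hmax⟩, by omega, hbal, fun o'' h1 h2 h3 => ?_⟩
    by_contra hlt
    push_neg at hlt
    obtain ⟨m'', hm''eq, hm''max⟩ := h1
    subst hm''eq
    have Hblk : ∀ m', isMax P m' → (2*q₀:ℤ) < 2*m'+1 → (2*m'+1:ℤ) ≤ 2*m''+1 →
        ∃ q', isMin P q' ∧ blkMem P q' m' ∧ (2*q₀:ℤ) < 2*q' := by
      intro m' hm' h1' h2'
      have hq₀m' : q₀ < m' := by
        rcases eq_or_lt_of_le (show q₀ ≤ m' by omega) with hh | hh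
        · exfalso
          have : m ≤ m' := hm' m (hh ▸ hq₀mem)
          omega
        · exact hh
      have hm'm : m' < m := by omega
      have hax : ¬ blkMem P q₀ m' := fun hmem => by
        have : m ≤ m' := hm' m (blkMem_trans hP (blkMem_symm hmem) hq₀mem)
        omega
      have hbdd : ∀ z, blkMem P m' z → q₀ + 1 ≤ z := fun z hz => by
        have := confine hP hNC hq₀mem hax hq₀m' hm'm hz; omega
      obtain ⟨q', hq'min, hq'mem⟩ := exists_min_of_bdd hP hbdd
      exact ⟨q', hq'min, hq'mem, by have := hbdd q' (blkMem_symm hq'mem); omega⟩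
    have hcnt := cnt_lt_maxes hP (base := 2*q₀) hm''max (by omega)
      (fun m' a b c => Hblk m' a b (by omega))
      (Hblk m'' hm''max (by omega) le_rfl)
    unfold bal at h3
    omega
  exact h ⟨(2*m+1, 2*q₀), Or.inr ⟨2*q₀, 2*m+1, rfl, ⟨q₀, rfl, hq₀min⟩, hpnr⟩, Or.inl rfl⟩

lemma blk_unbdd_above_infinite (hP : IsPartition P) {q : ℤ} {B : Set ℤ}
    (hB : B ∈ P) (hq : q ∈ B) (hub : ∀ b : ℤ, ∃ z, blkMem P q z ∧ b < z) : B.Infinite := by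
  refine Set.infinite_of_not_bddAbove (fun ⟨b, hb⟩ => ?_)
  obtain ⟨z, hz1, hz2⟩ := hub b
  obtain ⟨B'', hB'', hqB'', hzB''⟩ := hz1
  obtain ⟨C, -, hCuniq⟩ := hP.2 q
  have e1 : B = C := hCuniq B ⟨hB, hq⟩
  have e2 : B'' = C := hCuniq B'' ⟨hB'', hqB''⟩
  have : z ∈ B := by rw [e1, ← e2]; exact hzB''
  exact absurd (hb this) (by omega)

lemma blk_unbdd_below_infinite (hP : IsPartition P) {q : ℤ} {B : Set ℤ}
    (hB : B ∈ P) (hq : q ∈ B) (hub : ∀ b : ℤ, ∃ z, blkMem P q z ∧ z < b) : B.Infinite := by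
  refine Set.infinite_of_not_bddBelow (fun ⟨b, hb⟩ => ?_)
  obtain ⟨z, hz1, hz2⟩ := hub b
  obtain ⟨B'', hB'', hqB'', hzB''⟩ := hz1
  obtain ⟨C, -, hCuniq⟩ := hP.2 q
  have e1 : B = C := hCuniq B ⟨hB, hq⟩
  have e2 : B'' = C := hCuniq B'' ⟨hB'', hqB''⟩
  have : z ∈ B := by rw [e1, ← e2]; exact hzB''
  exact absurd (hb this) (by omega)

lemma H0_maximal (hP : IsPartition P) (hNC : Noncrossing P)
    (hOne : ∀ B ∈ P, ∀ B' ∈ P, B.Infinite → B'.Infinite → B = B') :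
    ∀ H', NCColl H' → H0 P ⊆ H' → H' = H0 P := by
  intro H' hH' hsub
  refine Set.Subset.antisymm (fun a haH' => ?_) hsub
  by_contra haH0
  have harc : Arcm1 a := hH'.1 a haH'
  have hunm : ∀ x : ℤ, (x = a.1 ∨ x = a.2) → ¬ Matched (H0 P) x := by
    rintro x hx ⟨b, hbH0, hxb⟩
    have hba : b ≠ a := fun h => haH0 (h ▸ hbH0)
    have := (hH'.2 a haH' b (hsub hbH0) (Ne.symm hba)).2
    unfold ShareVertex at this
    rcases hx with rfl | rfl <;> rcases hxb with h | h <;> tauto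
  obtain ⟨h1, h2⟩ := harc
  rcases Int.even_or_odd a.1 with ⟨q, hq⟩ | ⟨m, hm⟩
  · -- a.1 = 2q even, a.2 odd
    obtain ⟨m, hm⟩ : ∃ m, a.2 = 2*m+1 := by
      obtain ⟨k, hk⟩ := h2
      exact ⟨(a.2 - 1)/2, by omega⟩
    have hev := even_unmatched hP hNC (q := q) (by
      have hx := hunm a.1 (Or.inl rfl)
      rw [show (2*q : ℤ) = a.1 by omega]; exact hx)
    have hod := odd_unmatched hP hNC (m := m) (by
      have hx := hunm a.2 (Or.inr rfl)
      rw [show (2*m+1 : ℤ) = a.2 by omega]; exact hx)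
    obtain ⟨Bq, ⟨hBq, hqBq⟩, -⟩ := hP.2 q
    obtain ⟨Bm, ⟨hBm, hmBm⟩, -⟩ := hP.2 m
    have hinf1 := blk_unbdd_above_infinite hP hBq hqBq hev.2
    have hinf2 := blk_unbdd_below_infinite hP hBm hmBm hod.2
    have heq := hOne Bq hBq Bm hBm hinf1 hinf2
    -- q and m in the same block: contradiction with q being min and unbounded below
    have hqm : blkMem P q m := ⟨Bq, hBq, hqBq, heq ▸ hmBm⟩
    obtain ⟨z, hz1, hz2⟩ := hod.2 (q)
    have : blkMem P q z := blkMem_trans hP hqm hz1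
    exact absurd (hev.1 z this) (by omega)
  · -- a.1 = 2m+1 odd, a.2 even
    obtain ⟨q, hq⟩ : ∃ q, a.2 = 2*q := by
      obtain ⟨k, hk⟩ := h2
      exact ⟨a.2/2, by omega⟩
    have hod := odd_unmatched hP hNC (m := m) (by
      have hx := hunm a.1 (Or.inl rfl)
      rw [show (2*m+1 : ℤ) = a.1 by omega]; exact hx)
    have hev := even_unmatched hP hNC (q := q) (by
      have hx := hunm a.2 (Or.inr rfl)
      rw [show (2*q : ℤ) = a.2 by omega]; exact hx)
    obtain ⟨Bq, ⟨hBq, hqBq⟩, -⟩ := hP.2 q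
    obtain ⟨Bm, ⟨hBm, hmBm⟩, -⟩ := hP.2 m
    have hinf1 := blk_unbdd_above_infinite hP hBq hqBq hev.2
    have hinf2 := blk_unbdd_below_infinite hP hBm hmBm hod.2
    have heq := hOne Bq hBq Bm hBm hinf1 hinf2
    have hqm : blkMem P q m := ⟨Bq, hBq, hqBq, heq ▸ hmBm⟩
    obtain ⟨z, hz1, hz2⟩ := hod.2 (q)
    have : blkMem P q z := blkMem_trans hP hqm hz1
    exact absurd (hev.1 z this) (by omega)

lemma R_iff_adj {n p : ℤ} : ((2*p, 2*n+1) : ℤ × ℤ) ∈ H0 P ↔ Adj P n p := by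
  constructor
  · rintro (⟨p', q', heq, hadj⟩ | ⟨e, o, heq, he, hpnr⟩)
    · rw [Prod.mk.injEq] at heq
      obtain ⟨h1, h2⟩ := heq
      have : p = q' := by omega
      have h3 : n = p' := by omega
      subst this; subst h3
      exact hadj
    · rw [Prod.mk.injEq] at heq
      obtain ⟨m, hm, -⟩ := hpnr.1
      omega
  · intro h
    exact Or.inl ⟨n, p, rfl, h⟩

lemma eqvgen_H0_iff (hP : IsPartition P) {x y : ℤ} :
    Relation.EqvGen (fun n p => ((2*p, 2*n+1) : ℤ × ℤ) ∈ H0 P) x y ↔ blkMem P x y := by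
  constructor
  · intro h
    induction h with
    | rel a b hab => exact (R_iff_adj.1 hab).1
    | refl a => exact blkMem_refl hP a
    | symm a b _ ih => exact blkMem_symm ih
    | trans a b c _ _ ih1 ih2 => exact blkMem_trans hP ih1 ih2
  · intro h
    have aux : ∀ n : ℕ, ∀ x y : ℤ, blkMem P x y → x ≤ y → (y - x).toNat ≤ n →
        Relation.EqvGen (fun n p => ((2*p, 2*n+1) : ℤ × ℤ) ∈ H0 P) x y := by
      intro n
      induction n using Nat.strong_induction_on with
      | _ n IH =>
        intro x y hxy hle hn
        rcases eq_or_lt_of_le hle with rfl | hlt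
        · exact Relation.EqvGen.refl x
        · obtain ⟨s, ⟨hs1, hs2⟩, hs3⟩ := Int.exists_least_of_bdd
            (P := fun z => blkMem P x z ∧ x < z)
            ⟨x, fun z hz => le_of_lt hz.2⟩ ⟨y, hxy, hlt⟩
          have hsy : s ≤ y := hs3 y ⟨hxy, hlt⟩
          have hadj : Adj P x s := by
            refine ⟨hs1, hs2, fun z hz hzb => ?_⟩
            have : s ≤ z := hs3 z ⟨hz, hzb.1⟩
            omega
          have hstep : Relation.EqvGen (fun n p => ((2*p, 2*n+1) : ℤ × ℤ) ∈ H0 P) x s :=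
            Relation.EqvGen.rel _ _ (R_iff_adj.2 hadj)
          rcases eq_or_lt_of_le hsy with rfl | hsy'
          · exact hstep
          · have hrest := IH (y - s).toNat (by omega) s y
              (blkMem_trans hP (blkMem_symm hs1) hxy) (by omega) le_rfl
            exact Relation.EqvGen.trans _ _ _ hstep hrest
    rcases le_total x y with hle | hle
    · exact aux (y - x).toNat x y h hle le_rfl
    · exact Relation.EqvGen.symm _ _ (aux (x - y).toNat y x (blkMem_symm h) hle le_rfl)

lemma fmap_H0 (hP : IsPartition P) : fmap (H0 P) = P := by
  ext B
  constructor
  · rintro ⟨x, rfl⟩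
    obtain ⟨C, ⟨hC, hxC⟩, hCuniq⟩ := hP.2 x
    have : {y | Relation.EqvGen (fun n p => ((2*p, 2*n+1) : ℤ × ℤ) ∈ H0 P) x y} = C := by
      ext y
      rw [Set.mem_setOf_eq, eqvgen_H0_iff hP]
      constructor
      · rintro ⟨B'', hB'', hxB'', hyB''⟩
        have := hCuniq B'' ⟨hB'', hxB''⟩
        rw [← this]; exact hyB''
      · intro hy
        exact ⟨C, hC, hxC, hy⟩
    have h2 : (fun n p => ((2 * p, 2 * n + 1) : ℤ × ℤ) ∈ H0 P) =
        (fun n p => ((2*p, 2*n+1) : ℤ × ℤ) ∈ H0 P) := rfl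
    rw [h2, this]
    exact hC
  · intro hB
    obtain ⟨x, hx⟩ := hP.1 B hB
    refine ⟨x, ?_⟩
    ext y
    rw [Set.mem_setOf_eq, eqvgen_H0_iff hP]
    constructor
    · intro hy
      exact ⟨B, hB, hx, hy⟩
    · intro hy
      obtain ⟨C, -, hCuniq⟩ := hP.2 x
      have e1 : B = C := hCuniq B ⟨hB, hx⟩
      obtain ⟨B'', hB'', hxB'', hyB''⟩ := hy
      have e2 : B'' = C := hCuniq B'' ⟨hB'', hxB''⟩
      rw [e1, ← e2]; exact hyB''

end H0max

/-! ### The chain structure of an arbitrary noncrossing collection -/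

section Chains
variable {H : Set (ℤ × ℤ)}

/-- the successor relation of positive arcs -/
def R (H : Set (ℤ × ℤ)) (n p : ℤ) : Prop := ((2*p, 2*n+1) : ℤ × ℤ) ∈ H

lemma R_fmap_eq : (fun n p => ((2 * p, 2 * n + 1) : ℤ × ℤ) ∈ H) = R H := rfl

lemma R_lt (hH : NCColl H) {n p : ℤ} (h : R H n p) : n < p := by
  have := (hH.1 _ h).1
  dsimp only at this
  omega

lemma R_right_unique (hH : NCColl H) {n p p' : ℤ} (h : R H n p) (h' : R H n p') :
    p = p' := by
  by_contra hne
  have hne2 : ((2*p, 2*n+1) : ℤ × ℤ) ≠ (2*p', 2*n+1) := by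
    intro hcc; rw [Prod.mk.injEq] at hcc; omega
  exact (hH.2 _ h _ h' hne2).2 (Or.inr (Or.inr (Or.inr rfl)))

lemma R_left_unique (hH : NCColl H) {n n' p : ℤ} (h : R H n p) (h' : R H n' p) :
    n = n' := by
  by_contra hne
  have hne2 : ((2*p, 2*n+1) : ℤ × ℤ) ≠ (2*p, 2*n'+1) := by
    intro hcc; rw [Prod.mk.injEq] at hcc; omega
  exact (hH.2 _ h _ h' hne2).2 (Or.inl rfl)

lemma RTG_le (hH : NCColl H) {x y : ℤ} (h : Relation.ReflTransGen (R H) x y) : x ≤ y := by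
  induction h with
  | refl => exact le_refl x
  | tail _ hR ih => have := R_lt hH hR; omega

lemma RTG_comp_tail (hH : NCColl H) {x y : ℤ} (hxy : Relation.ReflTransGen (R H) x y) :
    ∀ z, Relation.ReflTransGen (R H) z y →
      Relation.ReflTransGen (R H) x z ∨ Relation.ReflTransGen (R H) z x := by
  induction hxy with
  | refl => exact fun z hz => Or.inr hz
  | @tail m y hxm hmy IH =>
    intro z hz
    rcases Relation.ReflTransGen.cases_tail hz with heq | ⟨m', h1, h2⟩
    · subst heq
      exact Or.inl (hxm.tail hmy)
    · have : m' = m := R_left_unique hH h2 hmy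
      subst this
      exact IH z h1

lemma RTG_comp_head (hH : NCColl H) {y x : ℤ} (hyx : Relation.ReflTransGen (R H) y x) :
    ∀ z, Relation.ReflTransGen (R H) y z →
      Relation.ReflTransGen (R H) x z ∨ Relation.ReflTransGen (R H) z x := by
  induction hyx using Relation.ReflTransGen.head_induction_on with
  | refl => exact fun z hz => Or.inl hz
  | @head y c hyc hcx IH =>
    intro z hz
    rcases Relation.ReflTransGen.cases_head hz with heq | ⟨c', h1, h2⟩
    · subst heq
      exact Or.inr (Relation.ReflTransGen.head hyc hcx)
    · have : c' = c := R_right_unique hH h1 hyc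
      subst this
      exact IH z h2

lemma eqv_iff_rtg (hH : NCColl H) {x y : ℤ} :
    Relation.EqvGen (R H) x y ↔
      Relation.ReflTransGen (R H) x y ∨ Relation.ReflTransGen (R H) y x := by
  constructor
  · intro h
    induction h with
    | rel a b hab => exact Or.inl (Relation.ReflTransGen.single hab)
    | refl a => exact Or.inl Relation.ReflTransGen.refl
    | symm a b _ ih => tauto
    | trans a b c _ _ ih1 ih2 =>
      rcases ih1 with h1 | h1 <;> rcases ih2 with h2 | h2
      · exact Or.inl (h1.trans h2)
      · exact RTG_comp_tail hH h1 c h2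
      · exact RTG_comp_head hH h1 c h2
      · exact Or.inr (h2.trans h1)
  · rintro (h | h)
    · induction h with
      | refl => exact Relation.EqvGen.refl x
      | tail _ hR ih => exact Relation.EqvGen.trans _ _ _ ih (Relation.EqvGen.rel _ _ hR)
    · refine Relation.EqvGen.symm _ _ ?_
      induction h with
      | refl => exact Relation.EqvGen.refl y
      | tail _ hR ih => exact Relation.EqvGen.trans _ _ _ ih (Relation.EqvGen.rel _ _ hR)

lemma straddle (hH : NCColl H) {a c b : ℤ} (hac : Relation.ReflTransGen (R H) a c)
    (hb1 : a < b) (hb2 : b < c) (hnb : ¬ Relation.EqvGen (R H) a b) :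
    ∃ x y, R H x y ∧ Relation.ReflTransGen (R H) a x ∧ x < b ∧ b < y ∧ y ≤ c := by
  induction hac with
  | refl => omega
  | @tail m c hxm hmc IH =>
    rcases lt_trichotomy m b with hm | hm | hm
    · exact ⟨m, c, hmc, hxm, hm, hb2, le_rfl⟩
    · subst hm
      exact absurd ((eqv_iff_rtg hH).2 (Or.inl hxm)) hnb
    · obtain ⟨x, y, h1, h2, h3, h4, h5⟩ := IH hm
      exact ⟨x, y, h1, h2, h3, h4, by have := R_lt hH hmc; omega⟩

/-- connected components of a noncrossing collection do not cross -/
lemma nc_classes (hH : NCColl H) {a b c d : ℤ} (h1 : a < b) (h2 : b < c) (h3 : c < d)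
    (hac : Relation.EqvGen (R H) a c) (hbd : Relation.EqvGen (R H) b d)
    (hnab : ¬ Relation.EqvGen (R H) a b) : False := by
  have hac' : Relation.ReflTransGen (R H) a c := by
    rcases (eqv_iff_rtg hH).1 hac with h | h
    · exact h
    · have := RTG_le hH h; omega
  have hbd' : Relation.ReflTransGen (R H) b d := by
    rcases (eqv_iff_rtg hH).1 hbd with h | h
    · exact h
    · have := RTG_le hH h; omega
  have hnbc : ¬ Relation.EqvGen (R H) b c := fun h =>
    hnab (Relation.EqvGen.trans _ _ _ hac (Relation.EqvGen.symm _ _ h))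
  obtain ⟨x'', y'', hR'', hRb'', hx''c, hcy'', hy''d⟩ := straddle hH hbd' h2 h3 hnbc
  have hax'' : a < x'' := by have := RTG_le hH hRb''; omega
  have hnax'' : ¬ Relation.EqvGen (R H) a x'' := fun h =>
    hnab (Relation.EqvGen.trans _ _ _ h
      (Relation.EqvGen.symm _ _ ((eqv_iff_rtg hH).2 (Or.inl hRb''))))
  obtain ⟨x₃, y₃, hR₃, hRa₃, hx₃, hx''y₃, hy₃c⟩ := straddle hH hac' hax'' hx''c hnax''
  -- the two arcs cross
  have hne : ((2*y₃, 2*x₃+1) : ℤ × ℤ) ≠ (2*y'', 2*x''+1) := by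
    intro hcc; rw [Prod.mk.injEq] at hcc; omega
  refine (hH.2 _ hR₃ _ hR'' hne).1 ?_
  exact Or.inl ⟨by dsimp only; omega, by dsimp only; omega, by dsimp only; omega⟩

/-- `fmap H` is a partition -/
lemma fmap_partition (H : Set (ℤ × ℤ)) : IsPartition (fmap H) := by
  constructor
  · rintro B ⟨x, rfl⟩
    exact ⟨x, Relation.EqvGen.refl x⟩
  · intro z
    refine ⟨{y | Relation.EqvGen (fun n p => ((2 * p, 2 * n + 1) : ℤ × ℤ) ∈ H) z y},
      ⟨⟨z, rfl⟩, Relation.EqvGen.refl z⟩, ?_⟩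
    rintro B ⟨⟨x, rfl⟩, hz⟩
    ext y
    simp only [Set.mem_setOf_eq]
    constructor
    · intro h
      exact Relation.EqvGen.trans _ _ _ (Relation.EqvGen.symm _ _ hz) h
    · intro h
      exact Relation.EqvGen.trans _ _ _ hz h

lemma blkMem_fmap {x y : ℤ} :
    blkMem (fmap H) x y ↔ Relation.EqvGen (R H) x y := by
  constructor
  · rintro ⟨B, ⟨x₀, rfl⟩, hx, hy⟩
    exact Relation.EqvGen.trans _ _ _ (Relation.EqvGen.symm _ _ hx) hy
  · intro h
    exact ⟨{y | Relation.EqvGen (fun n p => ((2 * p, 2 * n + 1) : ℤ × ℤ) ∈ H) x y},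
      ⟨x, rfl⟩, Relation.EqvGen.refl x, h⟩

lemma fmap_noncrossing (hH : NCColl H) : Noncrossing (fmap H) := by
  rintro ⟨a, b, c, d, h1, h2, h3, B, hB, B', hB', hne, haB, hcB, hbB', hdB'⟩
  have hac : Relation.EqvGen (R H) a c := blkMem_fmap.1 ⟨B, hB, haB, hcB⟩
  have hbd : Relation.EqvGen (R H) b d := blkMem_fmap.1 ⟨B', hB', hbB', hdB'⟩
  have hnab : ¬ Relation.EqvGen (R H) a b := by
    intro h
    obtain ⟨x, rfl⟩ := hB
    obtain ⟨x', rfl⟩ := hB'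
    apply hne
    ext y
    simp only [Set.mem_setOf_eq, R_fmap_eq] at haB hbB' ⊢
    constructor
    · intro hy
      exact Relation.EqvGen.trans _ _ _ hbB' (Relation.EqvGen.trans _ _ _
        (Relation.EqvGen.symm _ _ h) (Relation.EqvGen.trans _ _ _
          (Relation.EqvGen.symm _ _ haB) hy))
    · intro hy
      exact Relation.EqvGen.trans _ _ _ haB (Relation.EqvGen.trans _ _ _ h
        (Relation.EqvGen.trans _ _ _ (Relation.EqvGen.symm _ _ hbB') hy))
  exact nc_classes hH h1 h2 h3 hac hbd hnab

end Chains

/-! ### Interior of an arc in a maximal configuration -/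

section Interior
variable {H : Set (ℤ × ℤ)}

lemma arc_lt (hH : NCColl H) {a : ℤ × ℤ} (ha : a ∈ H) : a.2 < a.1 := by
  have := (hH.1 a ha).1; omega

lemma arc_odd (hH : NCColl H) {a : ℤ × ℤ} (ha : a ∈ H) : Odd (a.1 - a.2) :=
  (hH.1 a ha).2

lemma stay_inside (hH : NCColl H) {t u : ℤ} (htu : (t,u) ∈ H) {c : ℤ × ℤ} (hc : c ∈ H)
    (hne : c ≠ (t,u)) (h : (u < c.1 ∧ c.1 < t) ∨ (u < c.2 ∧ c.2 < t)) :
    (u < c.1 ∧ c.1 < t) ∧ (u < c.2 ∧ c.2 < t) := by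
  have hlt := arc_lt hH hc
  have hpair := hH.2 c hc (t,u) htu hne
  rcases h with ⟨h1, h2⟩ | ⟨h1, h2⟩
  · refine ⟨⟨h1, h2⟩, ?_, by omega⟩
    rcases lt_trichotomy c.2 u with h3 | h3 | h3
    · exact absurd (Or.inl ⟨h3, h1, h2⟩) hpair.1
    · exact absurd (Or.inr (Or.inr (Or.inr h3))) hpair.2
    · exact h3
  · refine ⟨⟨by omega, ?_⟩, h1, h2⟩
    rcases lt_trichotomy c.1 t with h3 | h3 | h3
    · exact h3
    · exact absurd (Or.inl h3) hpair.2
    · exact absurd (Or.inr ⟨h1, h2, h3⟩) hpair.1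

noncomputable def mate (H : Set (ℤ × ℤ)) (x : ℤ) : ℤ :=
  if h : Matched H x then
    (if x = h.choose.1 then h.choose.2 else h.choose.1) else 0

lemma mate_spec1 (hH : NCColl H) {a : ℤ × ℤ} (ha : a ∈ H) {x : ℤ} (hx : x = a.1) :
    mate H x = a.2 := by
  have hM : Matched H x := ⟨a, ha, Or.inl hx⟩
  rw [mate, dif_pos hM]
  obtain ⟨hb1, hb2⟩ := hM.choose_spec
  set b := hM.choose with hbdef
  have hba : b = a := by
    by_contra hne
    refine (hH.2 b hb1 a ha hne).2 ?_
    rcases hb2 with h | h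
    · exact Or.inl (by omega)
    · exact Or.inr (Or.inr (Or.inl (by omega)))
  subst hba
  rw [if_pos (by omega)]

lemma mate_spec2 (hH : NCColl H) {a : ℤ × ℤ} (ha : a ∈ H) {x : ℤ} (hx : x = a.2) :
    mate H x = a.1 := by
  have hM : Matched H x := ⟨a, ha, Or.inr hx⟩
  rw [mate, dif_pos hM]
  obtain ⟨hb1, hb2⟩ := hM.choose_spec
  set b := hM.choose with hbdef
  have hba : b = a := by
    by_contra hne
    refine (hH.2 b hb1 a ha hne).2 ?_
    rcases hb2 with h | h
    · exact Or.inr (Or.inl (by omega))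
    · exact Or.inr (Or.inr (Or.inr (by omega)))
  subst hba
  have hlt := arc_lt hH ha
  rw [if_neg (by omega)]

lemma mate_arc (hH : NCColl H) {x : ℤ} (hM : Matched H x) :
    ∃ a ∈ H, (x = a.1 ∧ mate H x = a.2) ∨ (x = a.2 ∧ mate H x = a.1) := by
  obtain ⟨a, ha, hx | hx⟩ := hM
  · exact ⟨a, ha, Or.inl ⟨hx, mate_spec1 hH ha hx⟩⟩
  · exact ⟨a, ha, Or.inr ⟨hx, mate_spec2 hH ha hx⟩⟩

lemma parity_count {u t : ℤ} (h : Odd (t - u)) :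
    (Set.Ioo u t ∩ {x | Even x}).ncard = (Set.Ioo u t ∩ {x | Odd x}).ncard := by
  have hfinE : (Set.Ioo u t ∩ {x | Even x}).Finite :=
    (Set.finite_Ioo u t).subset Set.inter_subset_left
  have hfinO : (Set.Ioo u t ∩ {x | Odd x}).Finite :=
    (Set.finite_Ioo u t).subset Set.inter_subset_left
  obtain ⟨k, hk⟩ := h
  rcases Int.even_or_odd u with ⟨j, hj⟩ | ⟨j, hj⟩
  · -- u even, t odd
    refine le_antisymm ?_ ?_
    · refine ncard_le_of_inj (fun x => x - 1) ?_ ?_ hfinO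
      · rintro x ⟨⟨h1, h2⟩, ⟨l, hl⟩⟩
        exact ⟨⟨show u < x - 1 by omega, show x - 1 < t by omega⟩,
          ⟨l - 1, show x - 1 = 2*(l-1)+1 by omega⟩⟩
      · intro x _ y _ hxy
        have hxy' : x - 1 = y - 1 := hxy
        omega
    · refine ncard_le_of_inj (fun x => x + 1) ?_ ?_ hfinE
      · rintro x ⟨⟨h1, h2⟩, ⟨l, hl⟩⟩
        exact ⟨⟨show u < x + 1 by omega, show x + 1 < t by omega⟩,
          ⟨l + 1, show x + 1 = (l+1) + (l+1) by omega⟩⟩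
      · intro x _ y _ hxy
        have hxy' : x + 1 = y + 1 := hxy
        omega
  · -- u odd, t even
    refine le_antisymm ?_ ?_
    · refine ncard_le_of_inj (fun x => x + 1) ?_ ?_ hfinO
      · rintro x ⟨⟨h1, h2⟩, ⟨l, hl⟩⟩
        exact ⟨⟨show u < x + 1 by omega, show x + 1 < t by omega⟩,
          ⟨l, show x + 1 = 2*l+1 by omega⟩⟩
      · intro x _ y _ hxy
        have hxy' : x + 1 = y + 1 := hxy
        omega
    · refine ncard_le_of_inj (fun x => x - 1) ?_ ?_ hfinE
      · rintro x ⟨⟨h1, h2⟩, ⟨l, hl⟩⟩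
        exact ⟨⟨show u < x - 1 by omega, show x - 1 < t by omega⟩,
          ⟨l, show x - 1 = l + l by omega⟩⟩
      · intro x _ y _ hxy
        have hxy' : x - 1 = y - 1 := hxy
        omega

lemma matched_count (hH : NCColl H) {t u : ℤ} (htu : (t,u) ∈ H) :
    (Set.Ioo u t ∩ {x | Even x ∧ Matched H x}).ncard =
    (Set.Ioo u t ∩ {x | Odd x ∧ Matched H x}).ncard := by
  have hfinE : (Set.Ioo u t ∩ {x | Even x ∧ Matched H x}).Finite :=
    (Set.finite_Ioo u t).subset Set.inter_subset_left
  have hfinO : (Set.Ioo u t ∩ {x | Odd x ∧ Matched H x}).Finite :=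
    (Set.finite_Ioo u t).subset Set.inter_subset_left
  have key : ∀ x ∈ Set.Ioo u t, Matched H x →
      mate H x ∈ Set.Ioo u t ∧ Matched H (mate H x) ∧ mate H (mate H x) = x ∧
        Odd (x - mate H x) := by
    intro x hx hM
    obtain ⟨a, ha, hcase⟩ := mate_arc hH hM
    have hne : a ≠ (t,u) := by
      rintro rfl
      simp only [Set.mem_Ioo] at hx
      rcases hcase with ⟨h1, -⟩ | ⟨h1, -⟩ <;> dsimp only at h1 <;> omega
    simp only [Set.mem_Ioo] at hx
    have hodd := arc_odd hH ha
    obtain ⟨l, hl⟩ := hodd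
    rcases hcase with ⟨h1, h2⟩ | ⟨h1, h2⟩
    · have hin := stay_inside hH htu ha hne (Or.inl (by omega))
      exact ⟨by rw [Set.mem_Ioo]; omega, ⟨a, ha, Or.inr h2⟩,
        by rw [h2]; rw [mate_spec2 hH ha rfl]; omega, ⟨l, by omega⟩⟩
    · have hin := stay_inside hH htu ha hne (Or.inr (by omega))
      exact ⟨by rw [Set.mem_Ioo]; omega, ⟨a, ha, Or.inl h2⟩,
        by rw [h2]; rw [mate_spec1 hH ha rfl]; omega, ⟨-l-1, by omega⟩⟩
  refine le_antisymm ?_ ?_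
  · refine ncard_le_of_inj (mate H) ?_ ?_ hfinO
    · rintro x ⟨hx, hev, hM⟩
      obtain ⟨h1, h2, h3, h4⟩ := key x hx hM
      refine ⟨h1, ?_, h2⟩
      obtain ⟨j, hj⟩ := hev
      obtain ⟨l, hl⟩ := h4
      exact ⟨j - l - 1, by omega⟩
    · rintro x ⟨hx, -, hMx⟩ y ⟨hy, -, hMy⟩ hxy
      have h1 := (key x hx hMx).2.2.1
      have h2 := (key y hy hMy).2.2.1
      rw [← h1, ← h2, hxy]
  · refine ncard_le_of_inj (mate H) ?_ ?_ hfinE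
    · rintro x ⟨hx, hod, hM⟩
      obtain ⟨h1, h2, h3, h4⟩ := key x hx hM
      refine ⟨h1, ?_, h2⟩
      obtain ⟨j, hj⟩ := hod
      obtain ⟨l, hl⟩ := h4
      exact ⟨j - l, by omega⟩
    · rintro x ⟨hx, -, hMx⟩ y ⟨hy, -, hMy⟩ hxy
      have h1 := (key x hx hMx).2.2.1
      have h2 := (key y hy hMy).2.2.1
      rw [← h1, ← h2, hxy]

lemma unmatched_count (hH : NCColl H) {t u : ℤ} (htu : (t,u) ∈ H) :
    (Set.Ioo u t ∩ {x | Even x ∧ ¬ Matched H x}).ncard =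
    (Set.Ioo u t ∩ {x | Odd x ∧ ¬ Matched H x}).ncard := by
  have hsplE : Set.Ioo u t ∩ {x | Even x} =
      (Set.Ioo u t ∩ {x | Even x ∧ Matched H x}) ∪
      (Set.Ioo u t ∩ {x | Even x ∧ ¬ Matched H x}) := by
    ext x
    simp only [Set.mem_inter_iff, Set.mem_union, Set.mem_setOf_eq]
    tauto
  have hsplO : Set.Ioo u t ∩ {x | Odd x} =
      (Set.Ioo u t ∩ {x | Odd x ∧ Matched H x}) ∪
      (Set.Ioo u t ∩ {x | Odd x ∧ ¬ Matched H x}) := by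
    ext x
    simp only [Set.mem_inter_iff, Set.mem_union, Set.mem_setOf_eq]
    tauto
  have hdE : Disjoint (Set.Ioo u t ∩ {x | Even x ∧ Matched H x})
      (Set.Ioo u t ∩ {x | Even x ∧ ¬ Matched H x}) := by
    rw [Set.disjoint_left]
    rintro x ⟨-, -, h⟩ ⟨-, -, h'⟩
    exact h' h
  have hdO : Disjoint (Set.Ioo u t ∩ {x | Odd x ∧ Matched H x})
      (Set.Ioo u t ∩ {x | Odd x ∧ ¬ Matched H x}) := by
    rw [Set.disjoint_left]
    rintro x ⟨-, -, h⟩ ⟨-, -, h'⟩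
    exact h' h
  have hfin : ∀ s : Set ℤ, (Set.Ioo u t ∩ s).Finite :=
    fun s => (Set.finite_Ioo u t).subset Set.inter_subset_left
  have e1 := parity_count (u := u) (t := t) (by
    have := arc_odd hH htu
    dsimp only at this
    exact this)
  rw [hsplE, hsplO, Set.ncard_union_eq hdE (hfin _) (hfin _),
    Set.ncard_union_eq hdO (hfin _) (hfin _)] at e1
  have e2 := matched_count hH htu
  omega

lemma addable_lemma (hH : NCColl H) : ∀ n : ℕ, ∀ t u : ℤ, (t,u) ∈ H → (t - u).toNat ≤ n →
    ∀ T U : ℤ, u < U → U < T → T < t → Odd (T - U) →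
    ¬ Matched H T → ¬ Matched H U →
    ∃ b : ℤ × ℤ, Arcm1 b ∧ b ∉ H ∧
      ∀ c ∈ H, ¬ Cross b c ∧ ¬ Cross c b ∧ ¬ ShareVertex b c ∧ ¬ ShareVertex c b := by
  intro n
  induction n using Nat.strong_induction_on with
  | _ n IH =>
    intro t u htu hn T U hU1 hUT hT2 hodd hTm hUm
    by_cases hcross : ∃ c ∈ H, Cross (T, U) c ∨ Cross c (T, U)
    · obtain ⟨c, hc, hcr⟩ := hcross
      have hclt := arc_lt hH hc
      -- c ≠ (t,u)
      have hcne : c ≠ (t,u) := by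
        rintro rfl
        rcases hcr with (⟨h1, h2, h3⟩ | ⟨h1, h2, h3⟩) | (⟨h1, h2, h3⟩ | ⟨h1, h2, h3⟩) <;>
          dsimp only at h1 h2 h3 <;> omega
      -- a vertex V of (T,U) strictly inside c, and an endpoint of c inside (u,t)
      obtain ⟨V, hV1, hV2, hV3⟩ :
          ∃ V, (V = T ∨ V = U) ∧ c.2 < V ∧ V < c.1 := by
        rcases hcr with (⟨h1, h2, h3⟩ | ⟨h1, h2, h3⟩) | (⟨h1, h2, h3⟩ | ⟨h1, h2, h3⟩) <;>
          dsimp only at h1 h2 h3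
        · exact ⟨T, Or.inl rfl, by omega, by omega⟩
        · exact ⟨U, Or.inr rfl, by omega, by omega⟩
        · exact ⟨U, Or.inr rfl, by omega, by omega⟩
        · exact ⟨T, Or.inl rfl, by omega, by omega⟩
      have hcin : (u < c.1 ∧ c.1 < t) ∧ (u < c.2 ∧ c.2 < t) := by
        refine stay_inside hH htu hc hcne ?_
        rcases hcr with (⟨h1, h2, h3⟩ | ⟨h1, h2, h3⟩) | (⟨h1, h2, h3⟩ | ⟨h1, h2, h3⟩) <;>
          dsimp only at h1 h2 h3
        · exact Or.inr ⟨by omega, by omega⟩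
        · exact Or.inl ⟨by omega, by omega⟩
        · exact Or.inl ⟨by omega, by omega⟩
        · exact Or.inr ⟨by omega, by omega⟩
      have hVum : ¬ Matched H V := by rcases hV1 with rfl | rfl <;> assumption
      -- find unmatched vertices of both parities inside c
      have hc' : ((c.1, c.2) : ℤ × ℤ) ∈ H := by rwa [Prod.mk.eta]
      have hcount := unmatched_count hH hc'
      have hex : ∃ ve, (c.2 < ve ∧ ve < c.1) ∧ Even ve ∧ ¬ Matched H ve := by
        rcases Int.even_or_odd V with hpar | hpar
        · exact ⟨V, ⟨hV2, hV3⟩, hpar, hVum⟩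
        · have hpos : 0 < (Set.Ioo c.2 c.1 ∩ {x | Odd x ∧ ¬ Matched H x}).ncard := by
            rw [Set.ncard_pos ((Set.finite_Ioo _ _).subset Set.inter_subset_left)]
            exact ⟨V, by rw [Set.mem_Ioo]; exact ⟨hV2, hV3⟩, hpar, hVum⟩
          have : 0 < (Set.Ioo c.2 c.1 ∩ {x | Even x ∧ ¬ Matched H x}).ncard := by omega
          rw [Set.ncard_pos ((Set.finite_Ioo _ _).subset Set.inter_subset_left)] at this
          obtain ⟨ve, hve⟩ := this
          exact ⟨ve, by
            obtain ⟨h1, h2, h3⟩ := hve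
            rw [Set.mem_Ioo] at h1
            exact ⟨h1, h2, h3⟩⟩
      have hox : ∃ vo, (c.2 < vo ∧ vo < c.1) ∧ Odd vo ∧ ¬ Matched H vo := by
        rcases Int.even_or_odd V with hpar | hpar
        · have hpos : 0 < (Set.Ioo c.2 c.1 ∩ {x | Even x ∧ ¬ Matched H x}).ncard := by
            rw [Set.ncard_pos ((Set.finite_Ioo _ _).subset Set.inter_subset_left)]
            exact ⟨V, by rw [Set.mem_Ioo]; exact ⟨hV2, hV3⟩, hpar, hVum⟩
          have : 0 < (Set.Ioo c.2 c.1 ∩ {x | Odd x ∧ ¬ Matched H x}).ncard := by omega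
          rw [Set.ncard_pos ((Set.finite_Ioo _ _).subset Set.inter_subset_left)] at this
          obtain ⟨vo, hvo⟩ := this
          exact ⟨vo, by
            obtain ⟨h1, h2, h3⟩ := hvo
            rw [Set.mem_Ioo] at h1
            exact ⟨h1, h2, h3⟩⟩
        · exact ⟨V, ⟨hV2, hV3⟩, hpar, hVum⟩
      obtain ⟨ve, ⟨hve1, hve2⟩, hve3, hve4⟩ := hex
      obtain ⟨vo, ⟨hvo1, hvo2⟩, hvo3, hvo4⟩ := hox
      have hneq : ve ≠ vo := by
        rintro rfl
        obtain ⟨j, hj⟩ := hve3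
        obtain ⟨l, hl⟩ := hvo3
        omega
      have hlen : (c.1 - c.2).toNat < n := by
        have harc := arc_lt hH htu
        dsimp only at harc
        omega
      obtain ⟨j, hj⟩ := hve3
      obtain ⟨l, hl⟩ := hvo3
      rcases lt_trichotomy ve vo with hord | hord | hord
      · exact IH _ hlen c.1 c.2 hc' le_rfl vo ve hve1 hord hvo2
          ⟨l - j, by omega⟩ hvo4 hve4
      · omega
      · exact IH _ hlen c.1 c.2 hc' le_rfl ve vo hvo1 hord hve2
          ⟨j - l - 1, by omega⟩ hve4 hvo4
    · push_neg at hcross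
      refine ⟨(T, U), ⟨by dsimp only; omega, by
          obtain ⟨l, hl⟩ := hodd
          exact ⟨l, by dsimp only; omega⟩⟩, ?_, ?_⟩
      · intro hmem
        exact hTm ⟨(T,U), hmem, Or.inl rfl⟩
      · intro c hc
        refine ⟨(hcross c hc).1, (hcross c hc).2, ?_, ?_⟩
        · rintro (h | h | h | h) <;> dsimp only at h
          · exact hTm ⟨c, hc, Or.inl h⟩
          · exact hTm ⟨c, hc, Or.inr h⟩
          · exact hUm ⟨c, hc, Or.inl h⟩
          · exact hUm ⟨c, hc, Or.inr h⟩
        · rintro (h | h | h | h) <;> dsimp only at h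
          · exact hTm ⟨c, hc, Or.inl h.symm⟩
          · exact hUm ⟨c, hc, Or.inl h.symm⟩
          · exact hTm ⟨c, hc, Or.inr h.symm⟩
          · exact hUm ⟨c, hc, Or.inr h.symm⟩

/-- every vertex strictly inside an arc of a maximal configuration is matched -/
lemma inner_matched (hHom : HomConfigM1 H) {t u v : ℤ} (htu : (t,u) ∈ H)
    (h1 : u < v) (h2 : v < t) : Matched H v := by
  have hH := hHom.1
  by_contra hv
  -- unmatched vertices of both parities exist inside (u,t)
  have hcount := unmatched_count hH htu
  have hex : ∃ ve, (u < ve ∧ ve < t) ∧ Even ve ∧ ¬ Matched H ve := by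
    rcases Int.even_or_odd v with hpar | hpar
    · exact ⟨v, ⟨h1, h2⟩, hpar, hv⟩
    · have hpos : 0 < (Set.Ioo u t ∩ {x | Odd x ∧ ¬ Matched H x}).ncard := by
        rw [Set.ncard_pos ((Set.finite_Ioo _ _).subset Set.inter_subset_left)]
        exact ⟨v, by rw [Set.mem_Ioo]; exact ⟨h1, h2⟩, hpar, hv⟩
      have : 0 < (Set.Ioo u t ∩ {x | Even x ∧ ¬ Matched H x}).ncard := by omega
      rw [Set.ncard_pos ((Set.finite_Ioo _ _).subset Set.inter_subset_left)] at this
      obtain ⟨ve, hh1, hh2, hh3⟩ := this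
      rw [Set.mem_Ioo] at hh1
      exact ⟨ve, hh1, hh2, hh3⟩
  have hox : ∃ vo, (u < vo ∧ vo < t) ∧ Odd vo ∧ ¬ Matched H vo := by
    rcases Int.even_or_odd v with hpar | hpar
    · have hpos : 0 < (Set.Ioo u t ∩ {x | Even x ∧ ¬ Matched H x}).ncard := by
        rw [Set.ncard_pos ((Set.finite_Ioo _ _).subset Set.inter_subset_left)]
        exact ⟨v, by rw [Set.mem_Ioo]; exact ⟨h1, h2⟩, hpar, hv⟩
      have : 0 < (Set.Ioo u t ∩ {x | Odd x ∧ ¬ Matched H x}).ncard := by omega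
      rw [Set.ncard_pos ((Set.finite_Ioo _ _).subset Set.inter_subset_left)] at this
      obtain ⟨vo, hh1, hh2, hh3⟩ := this
      rw [Set.mem_Ioo] at hh1
      exact ⟨vo, hh1, hh2, hh3⟩
    · exact ⟨v, ⟨h1, h2⟩, hpar, hv⟩
  obtain ⟨ve, ⟨hve1, hve2⟩, ⟨j, hj⟩, hve4⟩ := hex
  obtain ⟨vo, ⟨hvo1, hvo2⟩, ⟨l, hl⟩, hvo4⟩ := hox
  have hb : ∃ b : ℤ × ℤ, Arcm1 b ∧ b ∉ H ∧
      ∀ c ∈ H, ¬ Cross b c ∧ ¬ Cross c b ∧ ¬ ShareVertex b c ∧ ¬ ShareVertex c b := by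
    rcases lt_trichotomy ve vo with hord | hord | hord
    · exact addable_lemma hH (t-u).toNat t u htu le_rfl vo ve hve1 hord hvo2
        ⟨l - j, by omega⟩ hvo4 hve4
    · omega
    · exact addable_lemma hH (t-u).toNat t u htu le_rfl ve vo hvo1 hord hve2
        ⟨j - l - 1, by omega⟩ hve4 hvo4
  obtain ⟨b, hb1, hb2, hb3⟩ := hb
  have hcoll : NCColl (insert b H) := by
    constructor
    · rintro a (rfl | ha)
      · exact hb1
      · exact hH.1 a ha
    · rintro a (rfl | ha) a' (rfl | ha') hne
      · exact absurd rfl hne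
      · exact ⟨(hb3 a' ha').1, (hb3 a' ha').2.2.1⟩
      · exact ⟨(hb3 a ha).2.1, (hb3 a ha).2.2.2⟩
      · exact hH.2 a ha a' ha' hne
  have heq := hHom.2 _ hcoll (Set.subset_insert b H)
  exact hb2 (heq ▸ Set.mem_insert b H)
end Interior

/-! ### Negative arcs of a maximal configuration are canonical partners -/

section NegArcs
variable {H : Set (ℤ × ℤ)}

lemma e_bot_isMin (hH : NCColl H) {o e : ℤ} (hoe : (o,e) ∈ H) (ho : Odd o) :
    Even e ∧ isMin (fmap H) (e/2) := by
  have hodd := arc_odd hH hoe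
  dsimp only at hodd
  obtain ⟨k, hk⟩ := ho
  have hev : Even e := by
    obtain ⟨l, hl⟩ := hodd
    exact ⟨k - l, by omega⟩
  obtain ⟨j, hj⟩ := hev
  refine ⟨⟨j, hj⟩, ?_⟩
  have hq : e/2 = j := by omega
  intro x hx
  have hEq := blkMem_fmap.1 hx
  rcases (eqv_iff_rtg hH).1 hEq with h | h
  · exact RTG_le hH h
  · rcases Relation.ReflTransGen.cases_tail h with heq | ⟨m, -, hm⟩
    · omega
    · exfalso
      have harc : ((2*(e/2), 2*m+1) : ℤ × ℤ) ∈ H := hm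
      have hnearc : ((2*(e/2), 2*m+1) : ℤ × ℤ) ≠ (o, e) := by
        intro hcc; rw [Prod.mk.injEq] at hcc; omega
      refine (hH.2 _ harc _ hoe hnearc).2 ?_
      exact Or.inr (Or.inl (by dsimp only; omega))

lemma o_top_isMax (hH : NCColl H) {o e : ℤ} (hoe : (o,e) ∈ H) (ho : Odd o) :
    isMax (fmap H) ((o-1)/2) := by
  obtain ⟨k, hk⟩ := ho
  have hm : (o-1)/2 = k := by omega
  intro x hx
  have hEq := blkMem_fmap.1 hx
  rcases (eqv_iff_rtg hH).1 hEq with h | h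
  · rcases Relation.ReflTransGen.cases_head h with heq | ⟨c, hc, -⟩
    · omega
    · exfalso
      have harc : ((2*c, 2*((o-1)/2)+1) : ℤ × ℤ) ∈ H := hc
      have hnearc : ((2*c, 2*((o-1)/2)+1) : ℤ × ℤ) ≠ (o, e) := by
        intro hcc; rw [Prod.mk.injEq] at hcc; omega
      refine (hH.2 _ harc _ hoe hnearc).2 ?_
      exact Or.inr (Or.inr (Or.inl (by dsimp only; omega)))
  · exact RTG_le hH h

lemma notMin_iff (hH : NCColl H) {x : ℤ} (hx : Even x) :
    (¬ isMin (fmap H) (x/2)) ↔ ∃ n, ((x, 2*n+1) : ℤ × ℤ) ∈ H := by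
  obtain ⟨j, hj⟩ := hx
  have h2 : 2*(x/2) = x := by omega
  constructor
  · intro h
    unfold isMin at h
    push_neg at h
    obtain ⟨z, hz1, hz2⟩ := h
    rcases (eqv_iff_rtg hH).1 (blkMem_fmap.1 hz1) with h | h
    · exact absurd (RTG_le hH h) (by omega)
    · rcases Relation.ReflTransGen.cases_tail h with heq | ⟨m, -, hm⟩
      · omega
      · exact ⟨m, by have : ((2*(x/2), 2*m+1) : ℤ × ℤ) ∈ H := hm; rwa [h2] at this⟩
  · rintro ⟨n, hn⟩ hmin
    have hR : R H n (x/2) := by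
      show ((2*(x/2), 2*n+1) : ℤ × ℤ) ∈ H
      rwa [h2]
    have hblk : blkMem (fmap H) (x/2) n :=
      blkMem_fmap.2 (Relation.EqvGen.symm _ _ (Relation.EqvGen.rel _ _ hR))
    have := hmin n hblk
    have := R_lt hH hR
    omega

lemma notMax_iff (hH : NCColl H) {x : ℤ} (hx : Odd x) :
    (¬ isMax (fmap H) ((x-1)/2)) ↔ ∃ p, ((2*p, x) : ℤ × ℤ) ∈ H := by
  obtain ⟨j, hj⟩ := hx
  have h2 : 2*((x-1)/2)+1 = x := by omega
  constructor
  · intro h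
    unfold isMax at h
    push_neg at h
    obtain ⟨z, hz1, hz2⟩ := h
    rcases (eqv_iff_rtg hH).1 (blkMem_fmap.1 hz1) with h | h
    · rcases Relation.ReflTransGen.cases_head h with heq | ⟨c, hc, -⟩
      · omega
      · exact ⟨c, by have : ((2*c, 2*((x-1)/2)+1) : ℤ × ℤ) ∈ H := hc; rwa [h2] at this⟩
    · exact absurd (RTG_le hH h) (by omega)
  · rintro ⟨p, hp⟩ hmax
    have hR : R H ((x-1)/2) p := by
      show ((2*p, 2*((x-1)/2)+1) : ℤ × ℤ) ∈ H
      rwa [h2]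
    have hblk : blkMem (fmap H) ((x-1)/2) p :=
      blkMem_fmap.2 (Relation.EqvGen.rel _ _ hR)
    have := hmax p hblk
    have := R_lt hH hR
    omega

lemma mem_Eset_iff {x : ℤ} :
    x ∈ Eset (fmap H) ↔ Even x ∧ isMin (fmap H) (x/2) := by
  constructor
  · rintro ⟨q, rfl, hq⟩
    exact ⟨⟨q, by omega⟩, by rwa [show (2*q)/2 = q by omega]⟩
  · rintro ⟨⟨j, hj⟩, h⟩
    exact ⟨x/2, by omega, h⟩

lemma mem_Oset_iff {x : ℤ} :
    x ∈ Oset (fmap H) ↔ Odd x ∧ isMax (fmap H) ((x-1)/2) := by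
  constructor
  · rintro ⟨m, rfl, hm⟩
    exact ⟨⟨m, rfl⟩, by rwa [show (2*m+1-1)/2 = m by omega]⟩
  · rintro ⟨⟨j, hj⟩, h⟩
    exact ⟨(x-1)/2, by omega, h⟩

/-- P2: a negative arc of a noncrossing collection gives a balanced interval. -/
lemma neg_bal (hH : NCColl H) {o e : ℤ} (hoe : (o,e) ∈ H) (ho : Odd o) :
    bal (fmap H) e o := by
  have hodd := arc_odd hH hoe
  have hlt := arc_lt hH hoe
  dsimp only at hodd hlt
  obtain ⟨lod, hlod⟩ := hodd
  set I := Set.Ioo e o with hI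
  have hfin : ∀ s : Set ℤ, (s ∩ I).Finite :=
    fun s => (Set.finite_Ioo e o).subset Set.inter_subset_right
  have hfin' : ∀ s : Set ℤ, (I ∩ s).Finite :=
    fun s => (Set.finite_Ioo e o).subset Set.inter_subset_left
  -- split evens
  have hsplE : I ∩ {x | Even x} =
      (Eset (fmap H) ∩ I) ∪ (I ∩ {x | ∃ n, ((x, 2*n+1) : ℤ × ℤ) ∈ H}) := by
    ext x
    simp only [Set.mem_inter_iff, Set.mem_union, Set.mem_setOf_eq]
    constructor
    · rintro ⟨hxI, hev⟩
      by_cases hmin : isMin (fmap H) (x/2)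
      · exact Or.inl ⟨mem_Eset_iff.2 ⟨hev, hmin⟩, hxI⟩
      · exact Or.inr ⟨hxI, (notMin_iff hH hev).1 hmin⟩
    · rintro (⟨hxE, hxI⟩ | ⟨hxI, n, hn⟩)
      · exact ⟨hxI, (mem_Eset_iff.1 hxE).1⟩
      · have := arc_odd hH hn
        dsimp only at this
        obtain ⟨l, hl⟩ := this
        exact ⟨hxI, ⟨n + l + 1, by omega⟩⟩
  have hdisjE : Disjoint (Eset (fmap H) ∩ I) (I ∩ {x | ∃ n, ((x, 2*n+1) : ℤ × ℤ) ∈ H}) := by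
    rw [Set.disjoint_left]
    rintro x ⟨hxE, -⟩ ⟨-, hn⟩
    obtain ⟨hev, hmin⟩ := mem_Eset_iff.1 hxE
    exact ((notMin_iff hH hev).2 hn) hmin
  have hsplO : I ∩ {x | Odd x} =
      (Oset (fmap H) ∩ I) ∪ (I ∩ {x | ∃ p, ((2*p, x) : ℤ × ℤ) ∈ H}) := by
    ext x
    simp only [Set.mem_inter_iff, Set.mem_union, Set.mem_setOf_eq]
    constructor
    · rintro ⟨hxI, hod⟩
      by_cases hmax : isMax (fmap H) ((x-1)/2)
      · exact Or.inl ⟨mem_Oset_iff.2 ⟨hod, hmax⟩, hxI⟩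
      · exact Or.inr ⟨hxI, (notMax_iff hH hod).1 hmax⟩
    · rintro (⟨hxO, hxI⟩ | ⟨hxI, p, hp⟩)
      · exact ⟨hxI, (mem_Oset_iff.1 hxO).1⟩
      · have := arc_odd hH hp
        dsimp only at this
        obtain ⟨l, hl⟩ := this
        exact ⟨hxI, ⟨p - l - 1, by omega⟩⟩
  have hdisjO : Disjoint (Oset (fmap H) ∩ I) (I ∩ {x | ∃ p, ((2*p, x) : ℤ × ℤ) ∈ H}) := by
    rw [Set.disjoint_left]
    rintro x ⟨hxO, -⟩ ⟨-, hp⟩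
    obtain ⟨hod, hmax⟩ := mem_Oset_iff.1 hxO
    exact ((notMax_iff hH hod).2 hp) hmax
  -- pos tops and pos bottoms are equinumerous inside I
  have hPE : (I ∩ {x | ∃ n, ((x, 2*n+1) : ℤ × ℤ) ∈ H}).ncard =
      (I ∩ {x | ∃ p, ((2*p, x) : ℤ × ℤ) ∈ H}).ncard := by
    have key : ∀ x ∈ I, ∀ n : ℤ, ((x, 2*n+1) : ℤ × ℤ) ∈ H →
        mate H x = 2*n+1 ∧ (2*n+1) ∈ I ∧ mate H (2*n+1) = x := by
      intro x hxI n hn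
      have h1 : mate H x = 2*n+1 := mate_spec1 hH hn rfl
      have h2 : mate H (2*n+1) = x := mate_spec2 hH hn rfl
      have hne : ((x, 2*n+1) : ℤ × ℤ) ≠ (o, e) := by
        rw [hI, Set.mem_Ioo] at hxI
        intro hcc; rw [Prod.mk.injEq] at hcc; omega
      have hin := stay_inside hH hoe hn hne (Or.inl (by
        rw [hI, Set.mem_Ioo] at hxI
        dsimp only
        omega))
      refine ⟨h1, ?_, h2⟩
      rw [hI, Set.mem_Ioo]
      dsimp only at hin
      exact ⟨hin.2.1, hin.2.2⟩
    have key2 : ∀ x ∈ I, ∀ p : ℤ, ((2*p, x) : ℤ × ℤ) ∈ H →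
        mate H x = 2*p ∧ (2*p) ∈ I ∧ mate H (2*p) = x := by
      intro x hxI p hp
      have h1 : mate H x = 2*p := mate_spec2 hH hp rfl
      have h2 : mate H (2*p) = x := mate_spec1 hH hp rfl
      have hne : ((2*p, x) : ℤ × ℤ) ≠ (o, e) := by
        rw [hI, Set.mem_Ioo] at hxI
        intro hcc; rw [Prod.mk.injEq] at hcc; omega
      have hin := stay_inside hH hoe hp hne (Or.inr (by
        rw [hI, Set.mem_Ioo] at hxI
        dsimp only
        omega))
      refine ⟨h1, ?_, h2⟩
      rw [hI, Set.mem_Ioo]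
      dsimp only at hin
      exact ⟨hin.1.1, hin.1.2⟩
    refine le_antisymm ?_ ?_
    · refine ncard_le_of_inj (mate H) ?_ ?_ (hfin' _)
      · rintro x ⟨hxI, n, hn⟩
        obtain ⟨h1, h2, h3⟩ := key x hxI n hn
        have hev : Even x := by
          have := arc_odd hH hn
          dsimp only at this
          obtain ⟨l, hl⟩ := this
          exact ⟨n + l + 1, by omega⟩
        obtain ⟨j, hj⟩ := hev
        refine ⟨by rw [h1]; exact h2, ⟨x/2, ?_⟩⟩
        rw [h1, show 2*(x/2) = x by omega]
        exact hn
      · rintro x ⟨hxI, n, hn⟩ y ⟨hyI, n', hn'⟩ hxy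
        have h3 := (key x hxI n hn).2.2
        have h3' := (key y hyI n' hn').2.2
        have e1 := (key x hxI n hn).1
        have e1' := (key y hyI n' hn').1
        rw [← e1] at h3
        rw [← e1'] at h3'
        rw [← h3, ← h3', hxy]
    · refine ncard_le_of_inj (mate H) ?_ ?_ (hfin' _)
      · rintro x ⟨hxI, p, hp⟩
        obtain ⟨h1, h2, h3⟩ := key2 x hxI p hp
        have hod : Odd x := by
          have := arc_odd hH hp
          dsimp only at this
          obtain ⟨l, hl⟩ := this
          exact ⟨p - l - 1, by omega⟩
        obtain ⟨j, hj⟩ := hod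
        refine ⟨by rw [h1]; exact h2, ⟨(x-1)/2, ?_⟩⟩
        rw [h1, show 2*((x-1)/2)+1 = x by omega]
        exact hp
      · rintro x ⟨hxI, p, hp⟩ y ⟨hyI, p', hp'⟩ hxy
        have h3 := (key2 x hxI p hp).2.2
        have h3' := (key2 y hyI p' hp').2.2
        have e1 := (key2 x hxI p hp).1
        have e1' := (key2 y hyI p' hp').1
        rw [← e1] at h3
        rw [← e1'] at h3'
        rw [← h3, ← h3', hxy]
  -- assemble
  have hpar : (I ∩ {x | Even x}).ncard = (I ∩ {x | Odd x}).ncard :=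
    parity_count ⟨lod, by omega⟩
  rw [hsplE, hsplO, Set.ncard_union_eq hdisjE (hfin _) (hfin' _),
    Set.ncard_union_eq hdisjO (hfin _) (hfin' _)] at hpar
  have hEO : (Eset (fmap H) ∩ I).ncard = (Oset (fmap H) ∩ I).ncard := by omega
  have hIoc : Set.Ioc e (o-1) = I := by
    rw [hI]; ext z; simp only [Set.mem_Ioc, Set.mem_Ioo]; omega
  unfold bal cnt
  rw [hIoc]
  exact hEO

end NegArcs

/-! ### P3, `sub_H0`, and the infinite-block uniqueness -/

section Final
variable {H : Set (ℤ × ℤ)}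

lemma neg_pnr (hHom : HomConfigM1 H) {o e : ℤ} (hoe : (o,e) ∈ H) (ho : Odd o) :
    pnr (fmap H) e o := by
  have hH := hHom.1
  have hlt := arc_lt hH hoe
  dsimp only at hlt
  have hbal := neg_bal hH hoe ho
  obtain ⟨k, hk⟩ := ho
  have hoO : o ∈ Oset (fmap H) := ⟨(o-1)/2, by omega, o_top_isMax hH hoe ⟨k, hk⟩⟩
  refine ⟨hoO, hlt, hbal, ?_⟩
  intro o₃ h1 h2 h3
  by_contra hcon
  push_neg at hcon
  obtain ⟨os, ⟨hos1, hos2, hos3⟩, hos4⟩ := Int.exists_least_of_bdd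
    (P := fun o' => o' ∈ Oset (fmap H) ∧ e < o' ∧ bal (fmap H) e o')
    ⟨e, fun z hz => le_of_lt hz.2.1⟩ ⟨o₃, h1, h2, h3⟩
  have hpnr_os : pnr (fmap H) e os := ⟨hos1, hos2, hos3, fun o' a b c => hos4 o' ⟨a,b,c⟩⟩
  have hosB : os ≤ o₃ := hos4 o₃ ⟨h1, h2, h3⟩
  have hosIn : Matched H os := inner_matched hHom hoe hos2 (by omega)
  obtain ⟨a, ha, hcase⟩ := hosIn
  obtain ⟨mos, hmos, hmosmax⟩ := hos1
  have hosodd : Odd os := ⟨mos, hmos⟩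
  have haodd := arc_odd hH ha
  have halt := arc_lt hH ha
  rcases hcase with h | h
  · -- os = a.1 : negative arc (os, a.2)
    have hpair : ((os, a.2) : ℤ × ℤ) ∈ H := by
      have heq : ((os, a.2) : ℤ × ℤ) = a := by rw [h]
      rw [heq]; exact ha
    have hane : a ≠ (o, e) := by
      intro hcc
      rw [hcc] at h
      dsimp only at h
      omega
    have hin := stay_inside hH hoe ha hane (Or.inl (by omega))
    have hbal3 := neg_bal hH hpair hosodd
    have he3E : a.2 ∈ Eset (fmap H) :=
      mem_Eset_iff.2 ⟨(e_bot_isMin hH hpair hosodd).1, (e_bot_isMin hH hpair hosodd).2⟩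
    exact pnr_inj (fmap_partition H) he3E hpnr_os (by omega) hbal3 hin.2.1
  · -- os = a.2 : a.1 is even, contradicting that os is a leftover odd
    have hev : Even a.1 := by
      obtain ⟨l, hl⟩ := haodd
      exact ⟨l + mos + 1, by omega⟩
    obtain ⟨j, hj⟩ := hev
    have hex : ∃ p, ((2*p, os) : ℤ × ℤ) ∈ H := by
      refine ⟨j, ?_⟩
      have heq : ((2*j, os) : ℤ × ℤ) = a := by
        rw [h]
        have : (2*j : ℤ) = a.1 := by omega
        rw [this]
      rw [heq]; exact ha
    have hmax2 : isMax (fmap H) ((os-1)/2) := by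
      rwa [show (os-1)/2 = mos by omega]
    exact (notMax_iff hH hosodd).2 hex hmax2

lemma sub_H0 (hHom : HomConfigM1 H) : H ⊆ H0 (fmap H) := by
  intro a ha
  have hH := hHom.1
  have hodd := arc_odd hH ha
  have hlt := arc_lt hH ha
  rcases Int.even_or_odd a.1 with ⟨j, hj⟩ | ⟨j, hj⟩
  · -- positive arc
    have ha2odd : Odd a.2 := by
      obtain ⟨l, hl⟩ := hodd
      exact ⟨j - l - 1, by omega⟩
    obtain ⟨n, hn⟩ := ha2odd
    have hR : R H n j := by
      show ((2*j, 2*n+1) : ℤ × ℤ) ∈ H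
      have heq : ((2*j, 2*n+1) : ℤ × ℤ) = a := by
        have h1 : (2*j : ℤ) = a.1 := by omega
        have h2 : (2*n+1 : ℤ) = a.2 := by omega
        rw [h1, h2]
      rw [heq]; exact ha
    refine Or.inl ⟨n, j, ?_, ?_⟩
    · have h1 : a.1 = (2*j : ℤ) := by omega
      have h2 : a.2 = (2*n+1 : ℤ) := by omega
      exact Prod.ext h1 h2
    · refine ⟨blkMem_fmap.2 (Relation.EqvGen.rel _ _ hR), R_lt hH hR, ?_⟩
      rintro z hz ⟨hz1, hz2⟩
      rcases (eqv_iff_rtg hH).1 (blkMem_fmap.1 hz) with h | h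
      · rcases Relation.ReflTransGen.cases_head h with heq | ⟨c, hc, hcz⟩
        · omega
        · have hcj : c = j := R_right_unique hH hc hR
          subst hcj
          have := RTG_le hH hcz
          omega
      · have := RTG_le hH h
        omega
  · -- negative arc
    have ho : Odd a.1 := ⟨j, hj⟩
    have hpair : ((a.1, a.2) : ℤ × ℤ) ∈ H := by rwa [Prod.mk.eta]
    refine Or.inr ⟨a.2, a.1, (Prod.mk.eta).symm, ?_, ?_⟩
    · exact mem_Eset_iff.2 ⟨(e_bot_isMin hH hpair ho).1, (e_bot_isMin hH hpair ho).2⟩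
    · exact neg_pnr hHom hpair ho

lemma no_two_unmatched (hHom : HomConfigM1 H) {T U : ℤ} (hUT : U < T) (hodd : Odd (T - U))
    (hTm : ¬ Matched H T) (hUm : ¬ Matched H U) : False := by
  have hH := hHom.1
  have hnoc : ∀ c ∈ H, ¬ Cross (T,U) c ∧ ¬ Cross c (T,U) := by
    intro c hc
    have hcH : ((c.1, c.2) : ℤ × ℤ) ∈ H := by rwa [Prod.mk.eta]
    constructor
    · rintro (⟨h1, h2, h3⟩ | ⟨h1, h2, h3⟩) <;> dsimp only at h1 h2 h3
      · exact hTm (inner_matched hHom hcH (by omega) (by omega))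
      · exact hUm (inner_matched hHom hcH (by omega) (by omega))
    · rintro (⟨h1, h2, h3⟩ | ⟨h1, h2, h3⟩) <;> dsimp only at h1 h2 h3
      · exact hUm (inner_matched hHom hcH (by omega) (by omega))
      · exact hTm (inner_matched hHom hcH (by omega) (by omega))
  have hbnotin : ((T,U) : ℤ × ℤ) ∉ H := fun h => hTm ⟨(T,U), h, Or.inl rfl⟩
  have hcoll : NCColl (insert ((T,U) : ℤ × ℤ) H) := by
    constructor
    · rintro a (rfl | ha)
      · exact ⟨by dsimp only; omega, by
          obtain ⟨l, hl⟩ := hodd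
          exact ⟨l, by dsimp only; omega⟩⟩
      · exact hH.1 a ha
    · rintro a (rfl | ha) a' (rfl | ha') hne
      · exact absurd rfl hne
      · refine ⟨(hnoc a' ha').1, ?_⟩
        rintro (h | h | h | h) <;> dsimp only at h
        · exact hTm ⟨a', ha', Or.inl h⟩
        · exact hTm ⟨a', ha', Or.inr h⟩
        · exact hUm ⟨a', ha', Or.inl h⟩
        · exact hUm ⟨a', ha', Or.inr h⟩
      · refine ⟨(hnoc a ha).2, ?_⟩
        rintro (h | h | h | h) <;> dsimp only at h
        · exact hTm ⟨a, ha, Or.inl h.symm⟩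
        · exact hUm ⟨a, ha, Or.inl h.symm⟩
        · exact hTm ⟨a, ha, Or.inr h.symm⟩
        · exact hUm ⟨a, ha, Or.inr h.symm⟩
      · exact hH.2 a ha a' ha' hne
  have heq := hHom.2 _ hcoll (Set.subset_insert _ _)
  exact hbnotin (heq ▸ Set.mem_insert _ _)

lemma main_case (hHom : HomConfigM1 H) {q₁ m₂ : ℤ}
    (hq₁min : isMin (fmap H) q₁)
    (hq₁up : ∀ b : ℤ, ∃ z, blkMem (fmap H) q₁ z ∧ b < z)
    (hm₂max : isMax (fmap H) m₂)
    (hm₂dn : ∀ b : ℤ, ∃ z, blkMem (fmap H) m₂ z ∧ z < b) : False := by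
  have hH := hHom.1
  have hP := fmap_partition H
  have hNCp := fmap_noncrossing hH
  -- Claim A: no balanced odd for 2*q₁
  have claimA : ∀ o' ∈ Oset (fmap H), 2*q₁ < o' → ¬ bal (fmap H) (2*q₁) o' := by
    rintro o' ⟨m'', rfl, hm''max⟩ hlt hbal
    have Hblk : ∀ m', isMax (fmap H) m' → (2*q₁:ℤ) < 2*m'+1 → (2*m'+1:ℤ) ≤ 2*m''+1 →
        ∃ q', isMin (fmap H) q' ∧ blkMem (fmap H) q' m' ∧ (2*q₁:ℤ) < 2*q' := by
      intro m' hm' h1' h2'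
      have hq₁m' : q₁ < m' := by
        rcases eq_or_lt_of_le (show q₁ ≤ m' by omega) with hh | hh
        · exfalso
          obtain ⟨z, hz1, hz2⟩ := hq₁up q₁
          have := hm' z (hh ▸ hz1)
          omega
        · exact hh
      have hax : ¬ blkMem (fmap H) q₁ m' := by
        intro hmem
        obtain ⟨z, hz1, hz2⟩ := hq₁up m'
        have := hm' z (blkMem_trans hP (blkMem_symm hmem) hz1)
        omega
      have hbdd : ∀ z, blkMem (fmap H) m' z → q₁ + 1 ≤ z := fun z hz => by
        have := confine_below hP hNCp hq₁up hax hq₁m' hz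
        omega
      obtain ⟨q', hq'min, hq'mem⟩ := exists_min_of_bdd hP hbdd
      exact ⟨q', hq'min, hq'mem, by have := hbdd q' (blkMem_symm hq'mem); omega⟩
    have hcnt := cnt_lt_maxes hP (base := 2*q₁) hm''max (by omega)
      (fun m' a b c => Hblk m' a b (by omega))
      (Hblk m'' hm''max (by omega) le_rfl)
    unfold bal at hbal
    omega
  -- Claim B: no leftover even balanced against 2*m₂+1
  have claimB : ∀ e₃ ∈ Eset (fmap H), e₃ < 2*m₂+1 → ¬ bal (fmap H) e₃ (2*m₂+1) := by
    rintro e₃ ⟨q₃, rfl, hq₃min⟩ hlt hbal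
    have hconf : ∀ q', isMin (fmap H) q' → q' < m₂ →
        ∃ m', isMax (fmap H) m' ∧ blkMem (fmap H) q' m' ∧ (2*m'+1:ℤ) ≤ 2*m₂+1-1 := by
      intro q' hq' hq'm₂
      have hax : ¬ blkMem (fmap H) m₂ q' := by
        intro hmem
        obtain ⟨z, hz1, hz2⟩ := hm₂dn q'
        have := hq' z (blkMem_trans hP (blkMem_symm hmem) hz1)
        omega
      have hbdd : ∀ z, blkMem (fmap H) q' z → z ≤ m₂ - 1 := fun z hz => by
        have := confine_above hP hNCp hm₂dn hax hq'm₂ hz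
        omega
      obtain ⟨m', hm'max, hm'mem⟩ := exists_max_of_bdd hP hbdd
      exact ⟨m', hm'max, blkMem_symm hm'mem,
        by have := hbdd m' (blkMem_symm hm'mem); omega⟩
    have hne : ∀ q', isMin (fmap H) q' → (2*q₃:ℤ) ≤ 2*q' → 2*q' ≤ 2*m₂+1-1 → q' < m₂ := by
      intro q' hq' h1 h2
      rcases eq_or_lt_of_le (show q' ≤ m₂ by omega) with hh | hh
      · exfalso
        obtain ⟨z, hz1, hz2⟩ := hm₂dn q'
        have := hq' z (hh ▸ hz1)
        omega
      · exact hh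
    have hq₃m₂ : q₃ < m₂ := hne q₃ hq₃min le_rfl (by omega)
    obtain ⟨m₃, hm₃max, hm₃mem, hm₃b⟩ := hconf q₃ hq₃min hq₃m₂
    have hcnt := cnt_lt_mins hP (base := 2*q₃) (w := 2*m₂+1) (by omega)
      (fun q' hq' h1 h2 => hconf q' hq' (hne q' hq' (by omega) h2))
      ⟨m₃, hm₃max, by
          have : q₃ ≤ m₃ := hm₃max q₃ (blkMem_symm hm₃mem)
          omega,
        hm₃b, fun q' hq'min hq'mem => by
          have : q' = q₃ := isMin_unique hP hq'min hq'mem hq₃min hm₃mem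
          omega⟩
    unfold bal at hbal
    omega
  -- both 2*q₁ and 2*m₂+1 are unmatched
  have hA_unm : ¬ Matched H (2*q₁) := by
    rintro ⟨a, ha, hcase⟩
    have hodd := arc_odd hH ha
    have halt := arc_lt hH ha
    rcases hcase with h | h
    · have ha2odd : Odd a.2 := by
        obtain ⟨l, hl⟩ := hodd
        exact ⟨q₁ - l - 1, by omega⟩
      obtain ⟨n, hn⟩ := ha2odd
      have hR : R H n q₁ := by
        show ((2*q₁, 2*n+1) : ℤ × ℤ) ∈ H
        have heq : ((2*q₁, 2*n+1) : ℤ × ℤ) = a := Prod.ext (by omega) (by omega)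
        rw [heq]; exact ha
      have hblk : blkMem (fmap H) q₁ n :=
        blkMem_fmap.2 (Relation.EqvGen.symm _ _ (Relation.EqvGen.rel _ _ hR))
      have := hq₁min n hblk
      have := R_lt hH hR
      omega
    · rcases Int.even_or_odd a.1 with ⟨l, hl⟩ | hod
      · obtain ⟨r, hr⟩ := hodd
        omega
      · have hpair : ((a.1, 2*q₁) : ℤ × ℤ) ∈ H := by
          have heq : ((a.1, 2*q₁) : ℤ × ℤ) = a := Prod.ext rfl (by omega)
          rw [heq]; exact ha
        have hb := neg_bal hH hpair hod
        have hOmem : a.1 ∈ Oset (fmap H) := mem_Oset_iff.2 ⟨hod, o_top_isMax hH hpair hod⟩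
        exact claimA a.1 hOmem (by omega) hb
  have hB_unm : ¬ Matched H (2*m₂+1) := by
    rintro ⟨a, ha, hcase⟩
    have hodd := arc_odd hH ha
    have halt := arc_lt hH ha
    rcases hcase with h | h
    · -- 2*m₂+1 = a.1 : negative arc
      have ha2ev : Even a.2 := by
        obtain ⟨l, hl⟩ := hodd
        exact ⟨m₂ - l, by omega⟩
      have hod : Odd a.1 := ⟨m₂, by omega⟩
      have hpair : ((a.1, a.2) : ℤ × ℤ) ∈ H := by rwa [Prod.mk.eta]
      have hb := neg_bal hH hpair hod
      have hEmem : a.2 ∈ Eset (fmap H) :=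
        mem_Eset_iff.2 ⟨(e_bot_isMin hH hpair hod).1, (e_bot_isMin hH hpair hod).2⟩
      have hb' : bal (fmap H) a.2 (2*m₂+1) := by rwa [← h] at hb
      exact claimB a.2 hEmem (by omega) hb'
    · -- 2*m₂+1 = a.2 : positive arc, m₂ has a successor
      have ha1ev : Even a.1 := by
        obtain ⟨l, hl⟩ := hodd
        exact ⟨l + m₂ + 1, by omega⟩
      obtain ⟨p, hp⟩ := ha1ev
      have hR : R H m₂ p := by
        show ((2*p, 2*m₂+1) : ℤ × ℤ) ∈ H
        have heq : ((2*p, 2*m₂+1) : ℤ × ℤ) = a := Prod.ext (by omega) (by omega)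
        rw [heq]; exact ha
      have hblk : blkMem (fmap H) m₂ p :=
        blkMem_fmap.2 (Relation.EqvGen.rel _ _ hR)
      have := hm₂max p hblk
      have := R_lt hH hR
      omega
  rcases lt_trichotomy (2*m₂+1) (2*q₁) with hord | hord | hord
  · exact no_two_unmatched hHom hord ⟨q₁ - m₂ - 1, by omega⟩ hA_unm hB_unm
  · omega
  · exact no_two_unmatched hHom hord ⟨m₂ - q₁, by omega⟩ hB_unm hA_unm

lemma fmap_infinite_unique (hHom : HomConfigM1 H) :
    ∀ B ∈ fmap H, ∀ B' ∈ fmap H, B.Infinite → B'.Infinite → B = B' := by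
  intro B hB B' hB' hiB hiB'
  by_contra hne
  have hH := hHom.1
  have hcl : ∀ {C : Set ℤ}, C ∈ fmap H → ∀ x ∈ C, ∀ y,
      (y ∈ C ↔ Relation.EqvGen (R H) x y) := by
    rintro C ⟨x₀, rfl⟩ x hx y
    simp only [Set.mem_setOf_eq] at hx ⊢
    rw [R_fmap_eq] at hx
    constructor
    · intro hy
      rw [R_fmap_eq] at hy
      exact Relation.EqvGen.trans _ _ _ (Relation.EqvGen.symm _ _ hx) hy
    · intro hy
      show Relation.EqvGen (R H) x₀ y
      exact Relation.EqvGen.trans _ _ _ hx hy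
  have hdiff : ∀ x ∈ B, ∀ y ∈ B', ¬ Relation.EqvGen (R H) x y := by
    intro x hx y hy hxy
    apply hne
    ext z
    rw [hcl hB x hx z, hcl hB' y hy z]
    constructor
    · intro h
      exact Relation.EqvGen.trans _ _ _ (Relation.EqvGen.symm _ _ hxy) h
    · intro h
      exact Relation.EqvGen.trans _ _ _ hxy h
  have dich : ∀ {C : Set ℤ}, C.Infinite →
      (∀ b : ℤ, ∃ z ∈ C, b < z) ∨ (∀ b : ℤ, ∃ z ∈ C, z < b) := by
    intro C hC
    by_contra hc
    push_neg at hc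
    obtain ⟨⟨b1, hb1⟩, ⟨b2, hb2⟩⟩ := hc
    exact hC ((Set.finite_Icc b2 b1).subset
      (fun z hz => Set.mem_Icc.2 ⟨hb2 z hz, hb1 z hz⟩))
  have upcase : ∀ {C C' : Set ℤ}, C ∈ fmap H → C' ∈ fmap H →
      (∀ x ∈ C, ∀ y ∈ C', ¬ Relation.EqvGen (R H) x y) → C.Nonempty →
      (∀ b, ∃ z ∈ C, b < z) → (∀ b, ∃ z ∈ C', b < z) → False := by
    intro C C' hC hC' hd hne0 hu hu'
    obtain ⟨a, haC⟩ := hne0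
    obtain ⟨b, hbC', hab⟩ := hu' a
    obtain ⟨c, hcC, hbc⟩ := hu b
    obtain ⟨d, hdC', hcd⟩ := hu' c
    exact nc_classes hH hab hbc hcd ((hcl hC a haC c).1 hcC)
      ((hcl hC' b hbC' d).1 hdC') (hd a haC b hbC')
  have dncase : ∀ {C C' : Set ℤ}, C ∈ fmap H → C' ∈ fmap H →
      (∀ x ∈ C, ∀ y ∈ C', ¬ Relation.EqvGen (R H) x y) → C.Nonempty →
      (∀ b, ∃ z ∈ C, z < b) → (∀ b, ∃ z ∈ C', z < b) → False := by
    intro C C' hC hC' hd hne0 hu hu'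
    obtain ⟨d, hdC⟩ := hne0
    obtain ⟨c, hcC', hcd⟩ := hu' d
    obtain ⟨b, hbC, hbc⟩ := hu c
    obtain ⟨a, haC', hab⟩ := hu' b
    exact nc_classes hH hab hbc hcd ((hcl hC' a haC' c).1 hcC')
      ((hcl hC b hbC d).1 hdC)
      (fun h => hd b hbC a haC' (Relation.EqvGen.symm _ _ h))
  -- the mixed case
  have mixed : ∀ {C C' : Set ℤ}, C ∈ fmap H → C' ∈ fmap H →
      (∀ x ∈ C, ∀ y ∈ C', ¬ Relation.EqvGen (R H) x y) →
      (∀ b, ∃ z ∈ C, b < z) → (∀ b, ∃ z ∈ C', z < b) →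
      ¬ (∀ b, ∃ z ∈ C, z < b) → ¬ (∀ b, ∃ z ∈ C', b < z) → False := by
    intro C C' hC hC' hd hu hd' hnCd hnC'u
    push_neg at hnCd hnC'u
    obtain ⟨b1, hb1⟩ := hnCd
    obtain ⟨b2, hb2⟩ := hnC'u
    -- C has a least element
    obtain ⟨z0, hz0C, -⟩ := hu 0
    obtain ⟨q₁, hq₁C, hq₁l⟩ := Int.exists_least_of_bdd (P := fun z => z ∈ C)
      ⟨b1, fun z hz => hb1 z hz⟩ ⟨z0, hz0C⟩
    obtain ⟨w0, hw0C', -⟩ := hd' 0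
    obtain ⟨m₂, hm₂C', hm₂g⟩ := Int.exists_greatest_of_bdd (P := fun z => z ∈ C')
      ⟨b2, fun z hz => hb2 z hz⟩ ⟨w0, hw0C'⟩
    refine main_case hHom (q₁ := q₁) (m₂ := m₂) ?_ ?_ ?_ ?_
    · intro x hx
      have hxC : x ∈ C := (hcl hC q₁ hq₁C x).2 (blkMem_fmap.1 hx)
      exact hq₁l x hxC
    · intro b
      obtain ⟨z, hzC, hz⟩ := hu b
      exact ⟨z, blkMem_fmap.2 ((hcl hC q₁ hq₁C z).1 hzC), hz⟩
    · intro x hx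
      have hxC : x ∈ C' := (hcl hC' m₂ hm₂C' x).2 (blkMem_fmap.1 hx)
      exact hm₂g x hxC
    · intro b
      obtain ⟨z, hzC, hz⟩ := hd' b
      exact ⟨z, blkMem_fmap.2 ((hcl hC' m₂ hm₂C' z).1 hzC), hz⟩
  have hdiff' : ∀ x ∈ B', ∀ y ∈ B, ¬ Relation.EqvGen (R H) x y :=
    fun x hx y hy h => hdiff y hy x hx (Relation.EqvGen.symm _ _ h)
  rcases dich hiB with hBu | hBd
  · rcases dich hiB' with hB'u | hB'd
    · exact upcase hB hB' hdiff hiB.nonempty hBu hB'u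
    · by_cases h1 : ∀ b, ∃ z ∈ B, z < b
      · exact dncase hB hB' hdiff hiB.nonempty h1 hB'd
      · by_cases h2 : ∀ b, ∃ z ∈ B', b < z
        · exact upcase hB hB' hdiff hiB.nonempty hBu h2
        · exact mixed hB hB' hdiff hBu hB'd h1 h2
  · rcases dich hiB' with hB'u | hB'd
    · by_cases h1 : ∀ b, ∃ z ∈ B', z < b
      · exact dncase hB' hB hdiff' hiB'.nonempty h1 hBd
      · by_cases h2 : ∀ b, ∃ z ∈ B, b < z
        · exact upcase hB' hB hdiff' hiB'.nonempty hB'u h2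
        · exact mixed hB' hB hdiff' hB'u hBd h1 h2
    · exact dncase hB hB' hdiff hiB.nonempty hBd hB'd

end Final

/-- Proposition 7.2: `f` is a bijection from the set of `|-1|`-Hom-configurations onto
the set of noncrossing partitions of `ℤ` having at most one infinite block. -/
theorem stmt17 :
    Set.BijOn fmap {H | HomConfigM1 H}
      {P | IsPartition P ∧ Noncrossing P ∧
        ∀ B ∈ P, ∀ B' ∈ P, B.Infinite → B'.Infinite → B = B'} := by
  refine ⟨?_, ?_, ?_⟩
  · intro H hH
    exact ⟨fmap_partition H, fmap_noncrossing hH.1, fmap_infinite_unique hH⟩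
  · intro H hH H' hH' heq
    have key : ∀ G : Set (ℤ × ℤ), HomConfigM1 G → G = H0 (fmap G) := fun G hG =>
      (hG.2 _ (H0_nccoll (fmap_partition G) (fmap_noncrossing hG.1)) (sub_H0 hG)).symm
    rw [key H hH, key H' hH', heq]
  · intro P hP
    obtain ⟨hP1, hP2, hP3⟩ := hP
    exact ⟨H0 P, ⟨H0_nccoll hP1 hP2, H0_maximal hP1 hP2 hP3⟩, fmap_H0 hP1⟩

end NegOneCY
end
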